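/- arXiv:1604.01234 — 2 statements merged into one kernel-verified Lean document; each statement's English description precedes it below -/
import Mathlib

section
/- Let a = {a_n} and b = {b_n} be two equivalent positive summable sequences. Then for every E ∈ 𝒞_a, the corresponding complementary set Π(E) ∈ 𝒞_b is bi-Lipschitz equivalent to E (the map π : E → π(E) is bi-Lipschitz), and consequently E and Π(E) have the same Assouad dimension and the same Lower Assouad dimension. -/
open scoped BigOperators
open Set

/-- `coverNum r F` is the minimal number of closed balls of radius `r`
needed to cover `F`. -/
noncomputable def coverNum (r : ℝ) (F : Set ℝ) : ℕ :=
  sInf {n : ℕ | ∃ S : Finset ℝ, S.card = n ∧ F ⊆ ⋃ x ∈ S, Metric.closedBall x r}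

/-- The Assouad dimension of a set `F ⊆ ℝ`. -/
noncomputable def dimA (F : Set ℝ) : ℝ :=
  sInf {α : ℝ | ∃ c > (0 : ℝ), ∃ ρ > (0 : ℝ), ∀ x ∈ F, ∀ r R : ℝ,
    0 < r → r < R → R < ρ →
    (coverNum r (Metric.closedBall x R ∩ F) : ℝ) ≤ c * (R / r) ^ α}

/-- The Lower Assouad dimension of a set `F ⊆ ℝ`. -/
noncomputable def dimL (F : Set ℝ) : ℝ :=
  sSup {α : ℝ | ∃ c > (0 : ℝ), ∃ ρ > (0 : ℝ), ∀ x ∈ F, ∀ r R : ℝ,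
    0 < r → r < R → R < ρ →
    c * (R / r) ^ α ≤ (coverNum r (Metric.closedBall x R ∩ F) : ℝ)}

/-- `E` is a complementary set of the (positive, summable) sequence `a`,
i.e. `E ∈ 𝒞_a`:  `E = [0, L] \ ⋃ U n` where the `U n` are disjoint open
intervals in `[0, L]` with `U n` of length `a n`, and `L = ∑ a`. -/
def IsComplementarySet (a : ℕ → ℝ) (E : Set ℝ) : Prop :=
  ∃ U : ℕ → Set ℝ,
    (∀ n, ∃ p q : ℝ, p < q ∧ q - p = a n ∧ U n = Set.Ioo p q) ∧
    (∀ n, U n ⊆ Set.Icc 0 (∑' i, a i)) ∧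
    Pairwise (Function.onFun Disjoint U) ∧
    E = Set.Icc 0 (∑' i, a i) \ ⋃ n, U n

/-- The decreasing complementary set `D_a = {∑_{i ≥ k} a i : k} ∪ {0}`,
obtained by placing the gaps in order from right to left starting at `L`. -/
noncomputable def decSet (a : ℕ → ℝ) : Set ℝ :=
  {0} ∪ {x : ℝ | ∃ k : ℕ, x = ∑' i : ℕ, a (k + i)}

/-- Length of the `j`-th closed interval (0-indexed, `j < 2 ^ k`) at step `k`
of the construction of the Cantor set associated to the gap sequence `a`:
it is the total length of all the gaps to be removed from that interval. -/
noncomputable def cantorLen (a : ℕ → ℝ) (k j : ℕ) : ℝ :=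
  ∑' m : ℕ, ∑ i ∈ Finset.range (2 ^ m), a (2 ^ (k + m) - 1 + 2 ^ m * j + i)

/-- Left endpoint of the `j`-th closed interval (0-indexed, `j < 2 ^ k`) at
step `k` of the construction of the Cantor set associated to `a`:  removing
from each step-`k` interval `I_j^k` the open gap of length `a (2 ^ k - 1 + j)`
produces the two step-`(k+1)` intervals `I_{2j}^{k+1}` and `I_{2j+1}^{k+1}`. -/
noncomputable def cantorLeft (a : ℕ → ℝ) : ℕ → ℕ → ℝ
  | 0, _ => 0
  | k + 1, j =>
    if j % 2 = 0 then cantorLeft a k (j / 2)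
    else cantorLeft a k (j / 2) + cantorLen a (k + 1) (j - 1) + a (2 ^ k - 1 + j / 2)

/-- The Cantor set `C_a` associated to the gap sequence `a`. -/
noncomputable def assocCantor (a : ℕ → ℝ) : Set ℝ :=
  ⋂ k : ℕ, ⋃ j ∈ Finset.range (2 ^ k),
    Set.Icc (cantorLeft a k j) (cantorLeft a k j + cantorLen a k j)

/-- `avgLen a n = s_n^{(a)} = 2 ^ (-n) ∑_{j ≥ 2 ^ n - 1} a j`, the average length of
the step-`n` intervals of `C_a` (with `a` 0-indexed, so this matches
`2^{-n} Σ_{j=2^n}^∞ a_j` for the 1-indexed sequence of the paper). -/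
noncomputable def avgLen (a : ℕ → ℝ) (n : ℕ) : ℝ :=
  (∑' j : ℕ, a (2 ^ n - 1 + j)) / 2 ^ n

/-- The gap sequence of the central Cantor set with ratio sequence `r`
(0-indexed): the gap `a i` has length `r 0 ⋯ r (n-1) * (1 - 2 * r n)` where
`2 ^ n - 1 ≤ i ≤ 2 ^ (n+1) - 2`, i.e. `n = log₂ (i + 1)`.  The central Cantor
set `C{r_j}` itself is `assocCantor (centralGaps r)`. -/
noncomputable def centralGaps (r : ℕ → ℝ) (i : ℕ) : ℝ :=
  (∏ j ∈ Finset.range (Nat.log 2 (i + 1)), r j) * (1 - 2 * r (Nat.log 2 (i + 1)))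

/-- A decreasing sequence `a` is doubling if `a n ≤ τ * a (2 * n)` (1-indexed)
for some constant `τ`; with 0-indexing this reads `a n ≤ τ * a (2 * n + 1)`. -/
def IsDoubling (a : ℕ → ℝ) : Prop :=
  ∃ τ : ℝ, ∀ n : ℕ, a n ≤ τ * a (2 * n + 1)

/-- A general sequence is doubling if its decreasing rearrangement is. -/
def IsDoublingGen (a : ℕ → ℝ) : Prop :=
  ∃ σ : Equiv.Perm ℕ, Antitone (a ∘ σ) ∧ IsDoubling (a ∘ σ)

section aux
open Metric Bornology MeasureTheory


lemma exists_cover (r : ℝ) (hr : 0 < r) (F : Set ℝ) (hF : IsBounded F) :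
    {n : ℕ | ∃ S : Finset ℝ, S.card = n ∧ F ⊆ ⋃ x ∈ S, Metric.closedBall x r}.Nonempty := by
  obtain ⟨C, hC⟩ := hF.subset_closedBall 0
  have htb : TotallyBounded F :=
    (isCompact_closedBall (0:ℝ) C).totallyBounded.subset hC
  obtain ⟨t, htf, hts⟩ := totallyBounded_iff.mp htb r hr
  refine ⟨htf.toFinset.card, htf.toFinset, rfl, hts.trans ?_⟩
  intro x hx
  simp only [mem_iUnion, Finset.mem_coe, Set.Finite.mem_toFinset] at *
  obtain ⟨y, hy, hxy⟩ := hx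
  exact ⟨y, hy, ball_subset_closedBall hxy⟩

lemma one_le_coverNum (r : ℝ) (hr : 0 < r) (F : Set ℝ) (hF : IsBounded F)
    (hne : F.Nonempty) : 1 ≤ coverNum r F := by
  have hmem := Nat.sInf_mem (exists_cover r hr F hF)
  obtain ⟨S, hScard, hScov⟩ := hmem
  rcases Nat.eq_zero_or_pos (coverNum r F) with h0 | h1
  · exfalso
    rw [coverNum] at h0
    rw [h0, Finset.card_eq_zero] at hScard
    subst hScard
    obtain ⟨x, hx⟩ := hne
    simpa using hScov hx
  · exact h1

/-- Transfer of covering numbers along a Lipschitz map. -/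
lemma coverNum_le_lip (f : ℝ → ℝ) (E' : Set ℝ) (K : ℝ) (hK : 0 < K)
    (hLip : ∀ v ∈ E', ∀ w ∈ E', |f v - f w| ≤ K * |v - w|)
    (A B : Set ℝ) (hB : B ⊆ E') (hA : A ⊆ f '' B) (hbd : IsBounded B)
    (r : ℝ) (hr : 0 < r) : coverNum (2 * K * r) A ≤ coverNum r B := by
  have hmem := Nat.sInf_mem (exists_cover r hr B hbd)
  obtain ⟨S, hScard, hScov⟩ := hmem
  classical
  -- for each s, pick a point of B in the ball if possible
  set g : ℝ → ℝ := fun s =>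
    if h : (B ∩ closedBall s r).Nonempty then f h.choose else 0 with hg
  have hcov2 : A ⊆ ⋃ x ∈ S.image g, closedBall x (2 * K * r) := by
    intro u hu
    obtain ⟨v, hvB, hfv⟩ := hA hu
    have := hScov hvB
    simp only [mem_iUnion] at this
    obtain ⟨s, hsS, hvs⟩ := this
    have hne : (B ∩ closedBall s r).Nonempty := ⟨v, hvB, hvs⟩
    obtain ⟨hwB, hws⟩ := hne.choose_spec
    simp only [mem_iUnion]
    refine ⟨g s, Finset.mem_image_of_mem g hsS, ?_⟩
    have hdist : |v - hne.choose| ≤ 2 * r := by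
      have h1 : |v - s| ≤ r := by rw [mem_closedBall, Real.dist_eq] at hvs; exact hvs
      have h2 : |hne.choose - s| ≤ r := by rw [mem_closedBall, Real.dist_eq] at hws; exact hws
      calc |v - hne.choose| = |(v - s) - (hne.choose - s)| := by ring_nf
        _ ≤ |v - s| + |hne.choose - s| := abs_sub _ _
        _ ≤ 2 * r := by linarith
    have := hLip v (hB hvB) hne.choose (hB hwB)
    rw [mem_closedBall, Real.dist_eq, ← hfv]
    have hgs : g s = f hne.choose := by rw [hg]; simp [hne]
    rw [hgs]
    calc |f v - f hne.choose| ≤ K * |v - hne.choose| := this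
      _ ≤ K * (2 * r) := by nlinarith [abs_nonneg (v - hne.choose)]
      _ = 2 * K * r := by ring
  calc coverNum (2 * K * r) A ≤ (S.image g).card :=
        Nat.sInf_le ⟨S.image g, rfl, hcov2⟩
    _ ≤ S.card := Finset.card_image_le
    _ = coverNum r B := hScard

def setA (F : Set ℝ) : Set ℝ :=
  {α : ℝ | ∃ c > (0 : ℝ), ∃ ρ > (0 : ℝ), ∀ x ∈ F, ∀ r R : ℝ,
    0 < r → r < R → R < ρ →
    (coverNum r (Metric.closedBall x R ∩ F) : ℝ) ≤ c * (R / r) ^ α}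

def setL (F : Set ℝ) : Set ℝ :=
  {α : ℝ | ∃ c > (0 : ℝ), ∃ ρ > (0 : ℝ), ∀ x ∈ F, ∀ r R : ℝ,
    0 < r → r < R → R < ρ →
    c * (R / r) ^ α ≤ (coverNum r (Metric.closedBall x R ∩ F) : ℝ)}

section
variable (E F : Set ℝ) (f g : ℝ → ℝ) (K : ℝ) (hK : 1 ≤ K)
  (hfF : ∀ x ∈ E, f x ∈ F) (hgf : ∀ x ∈ E, g (f x) = x)
  (hsurj : ∀ y ∈ F, ∃ x ∈ E, f x = y)
  (hfLip : ∀ v ∈ E, ∀ w ∈ E, |f v - f w| ≤ K * |v - w|)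
  (hgLip : ∀ v ∈ F, ∀ w ∈ F, |g v - g w| ≤ K * |v - w|)

include hK hfF hgf hsurj hfLip hgLip

lemma setA_mono : setA E ⊆ setA F := by
  rintro α ⟨c, hc, ρ, hρ, hprop⟩
  have hK0 : (0:ℝ) < K := lt_of_lt_of_le one_pos hK
  have hM : (0:ℝ) < 2 * K ^ 2 := by positivity
  refine ⟨c * (2 * K ^ 2) ^ α, by positivity, ρ / K, by positivity, ?_⟩
  intro y hy r R hr hrR hRρ
  obtain ⟨x, hxE, hfx⟩ := hsurj y hy
  set A := Metric.closedBall y R ∩ F with hA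
  set B := Metric.closedBall x (K * R) ∩ E with hB
  have hR0 : 0 < R := hr.trans hrR
  have hAB : A ⊆ f '' B := by
    rintro u ⟨huy, huF⟩
    obtain ⟨v, hvE, hfv⟩ := hsurj u huF
    refine ⟨v, ⟨?_, hvE⟩, hfv⟩
    rw [mem_closedBall, Real.dist_eq]
    have h2 : |g u - g y| ≤ K * |u - y| := hgLip u huF y hy
    have h3 : g u = v := by rw [← hfv, hgf v hvE]
    have h4 : g y = x := by rw [← hfx, hgf x hxE]
    rw [h3, h4] at h2
    have h5 : |u - y| ≤ R := by
      rw [mem_closedBall, Real.dist_eq] at huy; exact huy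
    nlinarith
  have hbd : IsBounded B := (isBounded_closedBall).subset inter_subset_left
  have hr' : 0 < r / (2 * K) := by positivity
  have step1 : coverNum r A ≤ coverNum (r / (2 * K)) B := by
    have := coverNum_le_lip f E K hK0 hfLip A B inter_subset_right hAB hbd
      (r / (2 * K)) hr'
    rwa [show 2 * K * (r / (2 * K)) = r by field_simp] at this
  have step2 : (coverNum (r / (2 * K)) B : ℝ) ≤ c * ((K * R) / (r / (2 * K))) ^ α := by
    refine hprop x hxE (r / (2 * K)) (K * R) hr' ?_ ?_
    · have h1 : r / (2 * K) < R := by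
        rw [div_lt_iff₀ (by positivity)]; nlinarith
      have h2 : R ≤ K * R := by nlinarith
      exact h1.trans_le h2
    · calc K * R < K * (ρ / K) := mul_lt_mul_of_pos_left hRρ hK0
        _ = ρ := by field_simp
  have key : ((K * R) / (r / (2 * K))) = (2 * K ^ 2) * (R / r) := by
    field_simp
  calc (coverNum r A : ℝ) ≤ (coverNum (r / (2 * K)) B : ℝ) := Nat.cast_le.mpr step1
    _ ≤ c * ((K * R) / (r / (2 * K))) ^ α := step2
    _ = c * ((2 * K ^ 2) * (R / r)) ^ α := by rw [key]
    _ = c * (2 * K ^ 2) ^ α * (R / r) ^ α := by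
        rw [Real.mul_rpow hM.le (by positivity)]; ring
end

section
variable (E F : Set ℝ) (f g : ℝ → ℝ) (K : ℝ) (hK : 1 ≤ K)
  (hfF : ∀ x ∈ E, f x ∈ F) (hgf : ∀ x ∈ E, g (f x) = x)
  (hsurj : ∀ y ∈ F, ∃ x ∈ E, f x = y)
  (hfLip : ∀ v ∈ E, ∀ w ∈ E, |f v - f w| ≤ K * |v - w|)
  (hgLip : ∀ v ∈ F, ∀ w ∈ F, |g v - g w| ≤ K * |v - w|)

include hK hfF hgf hsurj hfLip hgLip

lemma setL_mono : setL E ⊆ setL F := by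
  rintro α ⟨c, hc, ρ, hρ, hprop⟩
  have hK0 : (0:ℝ) < K := lt_of_lt_of_le one_pos hK
  set M : ℝ := 2 * K ^ 2 with hMdef
  have hM1 : (1:ℝ) < M := by nlinarith
  have hM : (0:ℝ) < M := one_pos.trans hM1
  refine ⟨min (c / M ^ α) (M ^ (-|α|)), ?_, ρ, hρ, ?_⟩
  · apply lt_min (by positivity) (Real.rpow_pos_of_pos hM _)
  intro y hy r R hr hrR hRρ
  obtain ⟨x, hxE, hfx⟩ := hsurj y hy
  have hR0 : 0 < R := hr.trans hrR
  set A := Metric.closedBall x (R / K) ∩ E with hA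
  set B := Metric.closedBall y R ∩ F with hB
  have hRr1 : 1 < R / r := (one_lt_div hr).mpr hrR
  have hbdB : IsBounded B := (isBounded_closedBall).subset inter_subset_left
  have hBne : B.Nonempty := ⟨y, mem_closedBall_self hR0.le, hy⟩
  have hcov : coverNum (2 * K * r) A ≤ coverNum r B := by
    refine coverNum_le_lip g F K hK0 hgLip A B inter_subset_right ?_ hbdB r hr
    rintro u ⟨hux, huE⟩
    refine ⟨f u, ⟨?_, hfF u huE⟩, hgf u huE⟩
    rw [mem_closedBall, Real.dist_eq, ← hfx]
    have h1 : |f u - f x| ≤ K * |u - x| := hfLip u huE x hxE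
    have h2 : |u - x| ≤ R / K := by
      rw [mem_closedBall, Real.dist_eq] at hux; exact hux
    calc |f u - f x| ≤ K * (R / K) := h1.trans (by nlinarith [abs_nonneg (u-x)])
      _ = R := by field_simp
  by_cases hcase : r < R / (2 * K ^ 2)
  · -- main case
    have h2Kr : 0 < 2 * K * r := by positivity
    have hlt : 2 * K * r < R / K := by
      rw [lt_div_iff₀ hK0]
      rw [lt_div_iff₀ (by positivity : (0:ℝ) < 2 * K ^ 2)] at hcase
      nlinarith
    have hRK : R / K < ρ := by
      have : R / K ≤ R := by
        rw [div_le_iff₀ hK0]; nlinarith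
      linarith
    have hkey := hprop x hxE (2 * K * r) (R / K) h2Kr hlt hRK
    have hle : coverNum (2 * K * r) (Metric.closedBall x (R / K) ∩ E) ≤ coverNum r B := hcov
    have hratio : (R / K) / (2 * K * r) = (R / r) / M := by
      rw [hMdef, div_div, div_div]; congr 1; ring
    calc min (c / M ^ α) (M ^ (-|α|)) * (R / r) ^ α
        ≤ (c / M ^ α) * (R / r) ^ α := by
          apply mul_le_mul_of_nonneg_right (min_le_left _ _)
            (Real.rpow_nonneg (by positivity) _)
      _ = c * ((R / r) / M) ^ α := by
          rw [Real.div_rpow (by positivity) hM.le]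
          field_simp
      _ = c * ((R / K) / (2 * K * r)) ^ α := by rw [hratio]
      _ ≤ (coverNum (2 * K * r) (Metric.closedBall x (R / K) ∩ E) : ℝ) := hkey
      _ ≤ (coverNum r B : ℝ) := Nat.cast_le.mpr hle
  · -- boundary case: R/r ≤ M, use coverNum ≥ 1
    push_neg at hcase
    have hRrM : R / r ≤ M := by
      rw [div_le_iff₀ hr]
      rw [div_le_iff₀ (by positivity : (0:ℝ) < 2 * K ^ 2)] at hcase
      nlinarith
    have h1le : (1 : ℝ) ≤ (coverNum r B : ℝ) := by
      exact_mod_cast one_le_coverNum r hr B hbdB hBne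
    refine le_trans ?_ h1le
    have hub : (R / r) ^ α ≤ M ^ |α| := by
      rcases le_or_gt 0 α with hα | hα
      · rw [abs_of_nonneg hα]
        exact Real.rpow_le_rpow (by positivity) hRrM hα
      · calc (R / r) ^ α ≤ 1 :=
              Real.rpow_le_one_of_one_le_of_nonpos hRr1.le hα.le
          _ ≤ M ^ |α| := Real.one_le_rpow hM1.le (abs_nonneg _)
    calc min (c / M ^ α) (M ^ (-|α|)) * (R / r) ^ α
        ≤ M ^ (-|α|) * M ^ |α| := by
          apply mul_le_mul (min_le_right _ _) hub
            (Real.rpow_nonneg (by positivity) _) (Real.rpow_nonneg hM.le _)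
      _ = 1 := by
          rw [← Real.rpow_add hM]; simp
end



lemma Ioo_sub_Icc_iff {p q A B : ℝ} (h : p < q) :
    Set.Ioo p q ⊆ Set.Icc A B ↔ A ≤ p ∧ q ≤ B := by
  constructor
  · intro hs
    constructor
    · by_contra hc
      push_neg at hc
      have h1 : p < min A q := lt_min hc h
      set z := (p + min A q) / 2 with hz
      have hz1 : p < z := by simp only [hz]; linarith
      have hz2 : z < min A q := by simp only [hz]; linarith
      have := hs ⟨hz1, hz2.trans_le (min_le_right _ _)⟩
      exact absurd this.1 (by push_neg; exact hz2.trans_le (min_le_left _ _))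
    · by_contra hc
      push_neg at hc
      have h1 : max B p < q := max_lt hc h
      set z := (max B p + q) / 2 with hz
      have hz1 : max B p < z := by simp only [hz]; linarith
      have hz2 : z < q := by simp only [hz]; linarith
      have := hs ⟨(le_max_right B p).trans_lt hz1, hz2⟩
      exact absurd this.2 (by push_neg; exact (le_max_left B p).trans_lt hz1)
  · rintro ⟨h1, h2⟩
    exact Set.Ioo_subset_Icc_self.trans (Set.Icc_subset_Icc h1 h2)

section main

variable {a b : ℕ → ℝ} {U : ℕ → Set ℝ} {p q : ℕ → ℝ} {E : Set ℝ}
variable (ha : ∀ n, 0 < a n) (hsa : Summable a)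
variable (hpq : ∀ n, p n < q n) (hlen : ∀ n, q n - p n = a n)
variable (hUn : ∀ n, U n = Set.Ioo (p n) (q n))
variable (hUsub : ∀ n, U n ⊆ Set.Icc 0 (∑' i, a i))
variable (hUdisj : Pairwise (Function.onFun Disjoint U))
variable (hE : E = Set.Icc 0 (∑' i, a i) \ ⋃ n, U n)

lemma hL0 (hsa : Summable a) (ha : ∀ n, 0 < a n) : 0 ≤ ∑' i, a i :=
  tsum_nonneg fun n => (ha n).le

include hpq hUn hUsub in
lemma hpq0 : ∀ n, 0 ≤ p n ∧ q n ≤ ∑' i, a i := by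
  intro n
  have := hUsub n
  rw [hUn n, Ioo_sub_Icc_iff (hpq n)] at this
  exact this

include hpq hUn hUsub hE in
lemma hstr : ∀ x ∈ E, ∀ n, ¬ U n ⊆ Set.Icc 0 x → U n ⊆ Set.Icc x (∑' i, a i) := by
  intro x hx n hn
  obtain ⟨hp0, hqL⟩ := hpq0 hpq hUn hUsub n
  rw [hUn n, Ioo_sub_Icc_iff (hpq n)] at hn ⊢
  push_neg at hn
  have hxq : x < q n := hn hp0
  have hxU : x ∉ U n := by
    rw [hE] at hx
    exact fun h => hx.2 (Set.mem_iUnion.mpr ⟨n, h⟩)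
  rw [hUn n, Set.mem_Ioo] at hxU
  push_neg at hxU
  have hxp : x ≤ p n := by
    by_contra hc
    push_neg at hc
    have := hxU hc
    linarith
  exact ⟨hxp, hqL⟩

include hpq hUn hUsub hE in
lemma hEsub : E ⊆ Set.Icc 0 (∑' i, a i) := by
  rw [hE]; exact Set.diff_subset

-- E has measure zero
include ha hsa hpq hlen hUn hUsub hUdisj hE in
lemma hEm : volume E = 0 := by
  have hvol : ∀ n, volume (U n) = ENNReal.ofReal (a n) := by
    intro n; rw [hUn n, Real.volume_Ioo, hlen n]
  have hmeas : ∀ n, MeasurableSet (U n) := by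
    intro n; rw [hUn n]; exact measurableSet_Ioo
  have hUU : volume (⋃ n, U n) = ENNReal.ofReal (∑' i, a i) := by
    rw [measure_iUnion hUdisj hmeas]
    simp_rw [hvol]
    rw [← ENNReal.ofReal_tsum_of_nonneg (fun n => (ha n).le) hsa]
  have hsub : (⋃ n, U n) ⊆ Set.Icc 0 (∑' i, a i) := Set.iUnion_subset hUsub
  rw [hE, measure_diff hsub (MeasurableSet.iUnion hmeas).nullMeasurableSet
    (by rw [hUU]; exact ENNReal.ofReal_ne_top)]
  rw [hUU, Real.volume_Icc, sub_zero, tsub_self]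

-- gap sum identity
include ha hsa hpq hlen hUn hUsub hUdisj hE in
lemma hgap : ∀ x ∈ E, ∀ y ∈ E, x ≤ y →
    y - x = ∑' (n : {n | U n ⊆ Set.Icc x y}), a n.1 := by
  intro x hx y hy hxy
  set T : Set ℕ := {n | U n ⊆ Set.Icc x y} with hT
  have hmeas : ∀ n, MeasurableSet (U n) := by
    intro n; rw [hUn n]; exact measurableSet_Ioo
  have hvol : ∀ n, volume (U n) = ENNReal.ofReal (a n) := by
    intro n; rw [hUn n, Real.volume_Ioo, hlen n]
  have hdisjT : Pairwise (Function.onFun Disjoint (fun n : T => U n.1)) := by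
    intro i j hij
    exact hUdisj fun h => hij (Subtype.ext h)
  have hUT : volume (⋃ n : T, U n.1) = ∑' n : T, ENNReal.ofReal (a n.1) := by
    rw [measure_iUnion hdisjT fun n => hmeas n.1]
    simp_rw [hvol]
  have hxI := hEsub hpq hUn hUsub hE hx
  have hyI := hEsub hpq hUn hUsub hE hy
  -- upper bound
  have hle1 : volume (⋃ n : T, U n.1) ≤ ENNReal.ofReal (y - x) := by
    rw [← Real.volume_Icc]
    exact measure_mono (Set.iUnion_subset fun n => n.2)
  -- lower bound
  have hsub2 : Set.Icc x y ⊆ E ∪ ⋃ n : T, U n.1 := by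
    intro z hz
    by_cases hzE : z ∈ E
    · exact Or.inl hzE
    · have hzI : z ∈ Set.Icc 0 (∑' i, a i) :=
        ⟨hxI.1.trans hz.1, hz.2.trans hyI.2⟩
      have : z ∈ ⋃ n, U n := by
        by_contra hc
        exact hzE (hE ▸ ⟨hzI, hc⟩)
      obtain ⟨m, hm⟩ := Set.mem_iUnion.mp this
      have hm1 : ¬ U m ⊆ Set.Icc 0 x := by
        intro hsub
        have := hsub hm
        have hzx : z = x := le_antisymm this.2 hz.1
        rw [hE] at hx
        exact hx.2 (Set.mem_iUnion.mpr ⟨m, hzx ▸ hm⟩)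
      have hm2 : U m ⊆ Set.Icc x (∑' i, a i) := hstr hpq hUn hUsub hE x hx m hm1
      have hm3 : U m ⊆ Set.Icc 0 y := by
        by_contra hc
        have := hstr hpq hUn hUsub hE y hy m hc hm
        have hzy : z = y := le_antisymm hz.2 this.1
        rw [hE] at hy
        exact hy.2 (Set.mem_iUnion.mpr ⟨m, hzy ▸ hm⟩)
      have hmT : m ∈ T := fun w hw => ⟨(hm2 hw).1, (hm3 hw).2⟩
      exact Or.inr (Set.mem_iUnion.mpr ⟨⟨m, hmT⟩, hm⟩)
  have hle2 : ENNReal.ofReal (y - x) ≤ volume (⋃ n : T, U n.1) := by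
    calc ENNReal.ofReal (y - x) = volume (Set.Icc x y) := by rw [Real.volume_Icc]
      _ ≤ volume (E ∪ ⋃ n : T, U n.1) := measure_mono hsub2
      _ ≤ volume E + volume (⋃ n : T, U n.1) := measure_union_le _ _
      _ = volume (⋃ n : T, U n.1) := by
          rw [hEm ha hsa hpq hlen hUn hUsub hUdisj hE, zero_add]
  have heq : ENNReal.ofReal (y - x) = ∑' n : T, ENNReal.ofReal (a n.1) := by
    rw [← hUT]; exact le_antisymm hle2 hle1
  have hsum : Summable (fun n : T => a n.1) := hsa.subtype T
  rw [← ENNReal.ofReal_tsum_of_nonneg (fun n : T => (ha n.1).le) hsum] at heq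
  have h1 : 0 ≤ y - x := sub_nonneg.mpr hxy
  have h2 : 0 ≤ ∑' n : T, a n.1 := tsum_nonneg fun n => (ha n.1).le
  exact (ENNReal.ofReal_eq_ofReal_iff h1 h2).mp heq

variable {π : ℝ → ℝ} (hb : ∀ n, 0 < b n) (hsb : Summable b)
variable (hπ : ∀ x : ℝ, π x = ∑' n : {n : ℕ // U n ⊆ Set.Icc 0 x}, b n.1)

-- π as indicator sum
include hπ in
lemma hπind : ∀ x : ℝ, π x = ∑' n : ℕ, Set.indicator {n | U n ⊆ Set.Icc 0 x} b n := by
  intro x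
  rw [hπ x]
  exact tsum_subtype {n | U n ⊆ Set.Icc 0 x} b

include hpq hUn hUsub hE hb hsb hπ in
lemma hπd : ∀ x ∈ E, ∀ y ∈ E, x ≤ y →
    π y = π x + ∑' (n : {n | U n ⊆ Set.Icc x y}), b n.1 := by
  intro x hx y hy hxy
  have hx0 : 0 ≤ x := (hEsub hpq hUn hUsub hE hx).1
  have hkey : ∀ n : ℕ, Set.indicator {n | U n ⊆ Set.Icc 0 y} b n =
      Set.indicator {n | U n ⊆ Set.Icc 0 x} b n +
      Set.indicator {n | U n ⊆ Set.Icc x y} b n := by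
    intro n
    by_cases h1 : U n ⊆ Set.Icc 0 x
    · have h2 : U n ⊆ Set.Icc 0 y := h1.trans (Set.Icc_subset_Icc_right hxy)
      have h3 : ¬ U n ⊆ Set.Icc x y := by
        intro hc
        have hmid : (p n + q n) / 2 ∈ U n := by
          rw [hUn n, Set.mem_Ioo]
          have := hpq n
          constructor <;> linarith
        have hle := (h1 hmid).2
        have hge := (hc hmid).1
        have hxeq : (p n + q n) / 2 = x := le_antisymm hle hge
        have hxU : x ∉ U n := by
          rw [hE] at hx
          exact fun h => hx.2 (Set.mem_iUnion.mpr ⟨n, h⟩)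
        exact hxU (hxeq ▸ hmid)
      have e1 : Set.indicator {n | U n ⊆ Set.Icc 0 x} b n = b n := Set.indicator_of_mem (show n ∈ {m | U m ⊆ Set.Icc 0 x} from h1) b
      have e2 : Set.indicator {n | U n ⊆ Set.Icc 0 y} b n = b n := Set.indicator_of_mem (show n ∈ {m | U m ⊆ Set.Icc 0 y} from h2) b
      have e3 : Set.indicator {n | U n ⊆ Set.Icc x y} b n = 0 := Set.indicator_of_notMem (show n ∉ {m | U m ⊆ Set.Icc x y} from h3) b
      rw [e1, e2, e3]; ring
    · by_cases h2 : U n ⊆ Set.Icc 0 y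
      · have h4 : U n ⊆ Set.Icc x (∑' i, a i) := hstr hpq hUn hUsub hE x hx n h1
        have h5 : U n ⊆ Set.Icc x y := fun w hw => ⟨(h4 hw).1, (h2 hw).2⟩
        have e1 : Set.indicator {n | U n ⊆ Set.Icc 0 x} b n = 0 := Set.indicator_of_notMem (show n ∉ {m | U m ⊆ Set.Icc 0 x} from h1) b
        have e2 : Set.indicator {n | U n ⊆ Set.Icc 0 y} b n = b n := Set.indicator_of_mem (show n ∈ {m | U m ⊆ Set.Icc 0 y} from h2) b
        have e3 : Set.indicator {n | U n ⊆ Set.Icc x y} b n = b n := Set.indicator_of_mem (show n ∈ {m | U m ⊆ Set.Icc x y} from h5) b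
        rw [e1, e2, e3]; ring
      · have h5 : ¬ U n ⊆ Set.Icc x y := by
          intro hc
          exact h2 (hc.trans (Set.Icc_subset_Icc_left hx0))
        have e1 : Set.indicator {n | U n ⊆ Set.Icc 0 x} b n = 0 := Set.indicator_of_notMem (show n ∉ {m | U m ⊆ Set.Icc 0 x} from h1) b
        have e2 : Set.indicator {n | U n ⊆ Set.Icc 0 y} b n = 0 := Set.indicator_of_notMem (show n ∉ {m | U m ⊆ Set.Icc 0 y} from h2) b
        have e3 : Set.indicator {n | U n ⊆ Set.Icc x y} b n = 0 := Set.indicator_of_notMem (show n ∉ {m | U m ⊆ Set.Icc x y} from h5) b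
        rw [e1, e2, e3]; ring
  rw [hπind hπ y, hπind hπ x]
  have hs1 : Summable (Set.indicator {n | U n ⊆ Set.Icc 0 x} b) := hsb.indicator _
  have hs2 : Summable (Set.indicator {n | U n ⊆ Set.Icc x y} b) := hsb.indicator _
  calc ∑' n : ℕ, Set.indicator {n | U n ⊆ Set.Icc 0 y} b n
      = ∑' n : ℕ, (Set.indicator {n | U n ⊆ Set.Icc 0 x} b n +
          Set.indicator {n | U n ⊆ Set.Icc x y} b n) := by
        exact tsum_congr hkey
    _ = (∑' n : ℕ, Set.indicator {n | U n ⊆ Set.Icc 0 x} b n) +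
        ∑' n : ℕ, Set.indicator {n | U n ⊆ Set.Icc x y} b n := Summable.tsum_add hs1 hs2
    _ = _ := by
        congr 1
        exact (tsum_subtype {n | U n ⊆ Set.Icc x y} b).symm

include hpq hUn hUsub hE hb hsb hπ in
lemma hπmonoE : ∀ x ∈ E, ∀ y ∈ E, x ≤ y → π x ≤ π y := by
  intro x hx y hy hxy
  rw [hπd hpq hUn hUsub hE hb hsb hπ x hx y hy hxy]
  have : 0 ≤ ∑' (n : {n | U n ⊆ Set.Icc x y}), b n.1 :=
    tsum_nonneg fun n => (hb n.1).le
  linarith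

-- bi-Lipschitz
include ha hsa hpq hlen hUn hUsub hUdisj hE hb hsb hπ in
lemma hbl (c : ℝ) (hc1 : 1 ≤ c) (hcab : ∀ n, c⁻¹ ≤ a n / b n ∧ a n / b n ≤ c) :
    ∀ x ∈ E, ∀ y ∈ E,
      c⁻¹ * |x - y| ≤ |π x - π y| ∧ |π x - π y| ≤ c * |x - y| := by
  have hc0 : (0:ℝ) < c := lt_of_lt_of_le one_pos hc1
  have hab1 : ∀ n, b n ≤ c * a n := by
    intro n
    have h := (hcab n).1
    rw [le_div_iff₀ (hb n)] at h
    calc b n = c * (c⁻¹ * b n) := by field_simp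
      _ ≤ c * a n := by
        apply mul_le_mul_of_nonneg_left _ hc0.le
        linarith
  have hab2 : ∀ n, a n ≤ c * b n := by
    intro n
    have h := (hcab n).2
    rw [div_le_iff₀ (hb n)] at h
    linarith [h]
  -- main for x ≤ y
  have main : ∀ x ∈ E, ∀ y ∈ E, x ≤ y →
      c⁻¹ * (y - x) ≤ π y - π x ∧ π y - π x ≤ c * (y - x) := by
    intro x hx y hy hxy
    have hg := hgap ha hsa hpq hlen hUn hUsub hUdisj hE x hx y hy hxy
    have hd := hπd hpq hUn hUsub hE hb hsb hπ x hx y hy hxy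
    set T : Set ℕ := {n | U n ⊆ Set.Icc x y}
    have hsA : Summable (fun n : T => a n.1) := hsa.subtype T
    have hsB : Summable (fun n : T => b n.1) := hsb.subtype T
    have h1 : (∑' n : T, b n.1) ≤ c * ∑' n : T, a n.1 := by
      rw [← tsum_mul_left]
      exact Summable.tsum_le_tsum (fun n => hab1 n.1) hsB (hsA.mul_left c)
    have h2 : (∑' n : T, a n.1) ≤ c * ∑' n : T, b n.1 := by
      rw [← tsum_mul_left]
      exact Summable.tsum_le_tsum (fun n => hab2 n.1) hsA (hsB.mul_left c)
    constructor
    · rw [hg, hd]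
      rw [add_sub_cancel_left]
      rw [inv_mul_le_iff₀ hc0] at *
      · linarith
    · rw [hg, hd, add_sub_cancel_left]
      linarith
  intro x hx y hy
  rcases le_total x y with h | h
  · obtain ⟨h1, h2⟩ := main x hx y hy h
    have hmo := hπmonoE hpq hUn hUsub hE hb hsb hπ x hx y hy h
    rw [abs_sub_comm x y, abs_sub_comm (π x) (π y),
      abs_of_nonneg (by linarith : (0:ℝ) ≤ y - x),
      abs_of_nonneg (by linarith : (0:ℝ) ≤ π y - π x)]
    exact ⟨h1, h2⟩
  · obtain ⟨h1, h2⟩ := main y hy x hx h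
    have hmo := hπmonoE hpq hUn hUsub hE hb hsb hπ y hy x hx h
    rw [abs_of_nonneg (by linarith : (0:ℝ) ≤ x - y),
      abs_of_nonneg (by linarith : (0:ℝ) ≤ π x - π y)]
    exact ⟨h1, h2⟩

include hpq hUn hUdisj in
lemma hcore : ∀ m n : ℕ, m ≠ n → p m < q n → p n < q m → False := by
  intro m n hmn h1 h2
  have h3 : max (p m) (p n) < min (q m) (q n) := by
    rcases max_cases (p m) (p n) with ⟨he, _⟩ | ⟨he, _⟩ <;>
      rcases min_cases (q m) (q n) with ⟨he2, _⟩ | ⟨he2, _⟩ <;>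
      rw [he, he2] <;> first
        | exact hpq m | exact hpq n | exact h1 | exact h2
  set z := (max (p m) (p n) + min (q m) (q n)) / 2 with hz
  have hzm : z ∈ U m := by
    rw [hUn m, Set.mem_Ioo]
    constructor
    · calc p m ≤ max (p m) (p n) := le_max_left _ _
        _ < z := by rw [hz]; linarith
    · calc z < min (q m) (q n) := by rw [hz]; linarith
        _ ≤ q m := min_le_left _ _
  have hzn : z ∈ U n := by
    rw [hUn n, Set.mem_Ioo]
    constructor
    · calc p n ≤ max (p m) (p n) := le_max_right _ _
        _ < z := by rw [hz]; linarith
    · calc z < min (q m) (q n) := by rw [hz]; linarith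
        _ ≤ q n := min_le_right _ _
  exact Set.disjoint_left.mp (hUdisj hmn) hzm hzn

include hpq hUn hUsub hUdisj hE in
lemma hpE : ∀ n, p n ∈ E := by
  intro n
  rw [hE]
  obtain ⟨h0, hL⟩ := hpq0 hpq hUn hUsub n
  refine ⟨⟨h0, (hpq n).le.trans hL⟩, ?_⟩
  intro hc
  obtain ⟨m, hm⟩ := Set.mem_iUnion.mp hc
  rw [hUn m, Set.mem_Ioo] at hm
  rcases eq_or_ne m n with rfl | hmn
  · exact absurd hm.1 (lt_irrefl _)
  · exact hcore hpq hUn hUdisj m n hmn (hm.1.trans (hpq n)) hm.2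

include hpq hUn hUsub hUdisj hE in
lemma hqE : ∀ n, q n ∈ E := by
  intro n
  rw [hE]
  obtain ⟨h0, hL⟩ := hpq0 hpq hUn hUsub n
  refine ⟨⟨h0.trans (hpq n).le, hL⟩, ?_⟩
  intro hc
  obtain ⟨m, hm⟩ := Set.mem_iUnion.mp hc
  rw [hUn m, Set.mem_Ioo] at hm
  rcases eq_or_ne m n with rfl | hmn
  · exact absurd hm.2 (lt_irrefl _)
  · exact hcore hpq hUn hUdisj m n hmn hm.1 ((hpq n).trans hm.2)

include hpq hUn hUsub hUdisj hE hb hsb hπ in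
lemma hπq : ∀ n, π (q n) = π (p n) + b n := by
  intro n
  have := hπd hpq hUn hUsub hE hb hsb hπ (p n) (hpE hpq hUn hUsub hUdisj hE n)
    (q n) (hqE hpq hUn hUsub hUdisj hE n) (hpq n).le
  rw [this]
  congr 1
  have hset : {m | U m ⊆ Set.Icc (p n) (q n)} = ({n} : Set ℕ) := by
    ext m
    simp only [Set.mem_setOf_eq, Set.mem_singleton_iff]
    constructor
    · intro hm
      by_contra hmn
      rw [hUn m, Ioo_sub_Icc_iff (hpq m)] at hm
      exact hcore hpq hUn hUdisj n m (Ne.symm hmn)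
        (lt_of_le_of_lt hm.1 (hpq m)) (lt_of_lt_of_le (hpq m) hm.2)
    · intro h
      rw [h, hUn n]
      exact Set.Ioo_subset_Icc_self
  rw [tsum_subtype, hset]
  rw [tsum_eq_single n]
  · simp
  · intro m hmn
    exact Set.indicator_of_notMem (by simpa using hmn) b

include hpq hUn hsb hπ in
lemma hπ0 : π 0 = 0 := by
  rw [hπind hπ 0]
  have hset : ∀ n : ℕ, ¬ U n ⊆ Set.Icc 0 (0:ℝ) := by
    intro n hc
    rw [hUn n, Ioo_sub_Icc_iff (hpq n)] at hc
    linarith [hpq n, hc.1, hc.2]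
  have hz : ∀ n : ℕ, Set.indicator {n | U n ⊆ Set.Icc 0 (0:ℝ)} b n = 0 := fun n =>
    Set.indicator_of_notMem (show n ∉ {m | U m ⊆ Set.Icc 0 (0:ℝ)} from hset n) b
  calc ∑' n : ℕ, Set.indicator {n | U n ⊆ Set.Icc 0 (0:ℝ)} b n
      = ∑' _ : ℕ, (0:ℝ) := tsum_congr hz
    _ = 0 := tsum_zero

include hUsub hπ in
lemma hπL : π (∑' i, a i) = ∑' i, b i := by
  rw [hπind hπ _]
  have huniv : {n | U n ⊆ Set.Icc 0 (∑' i, a i)} = Set.univ := by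
    ext n; simp [hUsub n]
  rw [huniv, Set.indicator_univ]

include hb hπ in
lemma hπnonneg : ∀ x, 0 ≤ π x := by
  intro x
  rw [hπ x]
  exact tsum_nonneg fun n => (hb n.1).le

include hb hsb hπ in
lemma hπle : ∀ x, π x ≤ ∑' i, b i := by
  intro x
  rw [hπind hπ x]
  refine Summable.tsum_le_tsum ?_ (hsb.indicator _) hsb
  intro n
  exact Set.indicator_le_self' (fun m _ => (hb m).le) n

include ha hsa hpq hUn hUsub hE in
lemma hE0 : (0:ℝ) ∈ E := by
  rw [hE]
  refine ⟨⟨le_refl _, hL0 hsa ha⟩, ?_⟩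
  intro hc
  obtain ⟨m, hm⟩ := Set.mem_iUnion.mp hc
  rw [hUn m, Set.mem_Ioo] at hm
  have := (hpq0 hpq hUn hUsub m).1
  linarith [hm.1]

include hpq hUn hUsub hE in
lemma hLE : (∑' i, a i) ∈ E := by
  rw [hE]
  have hL : 0 ≤ ∑' i, a i := by
    by_contra hc
    push_neg at hc
    have := (hpq0 hpq hUn hUsub 0).1
    have := (hpq0 hpq hUn hUsub 0).2
    linarith [hpq 0]
  refine ⟨⟨hL, le_refl _⟩, ?_⟩
  intro hc
  obtain ⟨m, hm⟩ := Set.mem_iUnion.mp hc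
  rw [hUn m, Set.mem_Ioo] at hm
  have := (hpq0 hpq hUn hUsub m).2
  linarith [hm.2]

include hUn hE in
lemma hEclosed : IsClosed E := by
  rw [hE]
  apply IsClosed.sdiff isClosed_Icc
  exact isOpen_iUnion fun n => (hUn n) ▸ isOpen_Ioo

include ha hsa hpq hlen hUn hUsub hUdisj hE hb hsb hπ in
lemma hsurjπ (c : ℝ) (hc1 : 1 ≤ c) (hcab : ∀ n, c⁻¹ ≤ a n / b n ∧ a n / b n ≤ c) :
    ∀ y ∈ Set.Icc 0 (∑' i, b i), (∀ n, y ∉ Set.Ioo (π (p n)) (π (p n) + b n)) →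
    ∃ x ∈ E, π x = y := by
  intro y hyI hyV
  have hc0 : (0:ℝ) < c := lt_of_lt_of_le one_pos hc1
  have hL0' : 0 ≤ ∑' i, a i := hL0 hsa ha
  have hblip := hbl ha hsa hpq hlen hUn hUsub hUdisj hE hb hsb hπ c hc1 hcab
  have h0E : (0:ℝ) ∈ E := hE0 ha hsa hpq hUn hUsub hE
  have hLEm : (∑' i, a i) ∈ E := hLE hpq hUn hUsub hE
  have hmonoE := hπmonoE hpq hUn hUsub hE hb hsb hπ
  set A : Set ℝ := {z | z ∈ E ∧ π z ≤ y} with hA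
  have h0A : (0:ℝ) ∈ A := ⟨h0E, by rw [hπ0 hpq hUn hsb hπ]; exact hyI.1⟩
  have hAne : A.Nonempty := ⟨0, h0A⟩
  have hAbdd : BddAbove A := ⟨∑' i, a i, fun z hz => (hEsub hpq hUn hUsub hE hz.1).2⟩
  set x := sSup A with hx
  have hx0 : 0 ≤ x := le_csSup hAbdd h0A
  have hxL : x ≤ ∑' i, a i := csSup_le hAne fun z hz => (hEsub hpq hUn hUsub hE hz.1).2
  have hxE : x ∈ E := by
    by_contra hc
    have hxI : x ∈ Set.Icc 0 (∑' i, a i) := ⟨hx0, hxL⟩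
    have hxU : x ∈ ⋃ n, U n := by
      by_contra hc2
      exact hc (hE ▸ ⟨hxI, hc2⟩)
    obtain ⟨m, hm⟩ := Set.mem_iUnion.mp hxU
    rw [hUn m, Set.mem_Ioo] at hm
    obtain ⟨z, hzA, hzgt⟩ := exists_lt_of_lt_csSup hAne hm.1
    have hzx : z ≤ x := le_csSup hAbdd hzA
    have hzU : z ∈ U m := by
      rw [hUn m, Set.mem_Ioo]
      exact ⟨hzgt, lt_of_le_of_lt hzx hm.2⟩
    have hzE' := hzA.1
    rw [hE] at hzE'
    exact hzE'.2 (Set.mem_iUnion.mpr ⟨m, hzU⟩)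
  have hπxy : π x ≤ y := by
    by_contra hcon
    push_neg at hcon
    set ε := π x - y with hε
    have hε0 : 0 < ε := by linarith
    obtain ⟨z, hzA, hzgt⟩ := exists_lt_of_lt_csSup hAne
      (show x - ε / c < x by
        have : 0 < ε / c := div_pos hε0 hc0
        linarith)
    have hzx : z ≤ x := le_csSup hAbdd hzA
    have hmz : π z ≤ π x := hmonoE z hzA.1 x hxE hzx
    have hlip := (hblip z hzA.1 x hxE).2
    rw [abs_of_nonpos (by linarith : z - x ≤ 0),
      abs_of_nonpos (by linarith : π z - π x ≤ 0)] at hlip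
    have h1 : π x - π z ≤ c * (x - z) := by linarith
    have h2 : x - z < ε / c := by linarith
    have h3 : c * (x - z) < ε := by
      rw [← lt_div_iff₀' hc0]
      linarith
    have h4 : π z ≤ y := hzA.2
    linarith
  rcases eq_or_lt_of_le hπxy with heq | hlt
  · exact ⟨x, hxE, heq⟩
  exfalso
  have hxLlt : x < ∑' i, a i := by
    rcases eq_or_lt_of_le hxL with heq2 | h
    · exfalso
      rw [heq2, hπL hUsub hπ] at hlt
      exact absurd hyI.2 (not_le.mpr hlt)
    · exact h
  set Bs : Set ℝ := {z | z ∈ E ∧ x < z} with hBs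
  have hBne : Bs.Nonempty := ⟨∑' i, a i, hLEm, hxLlt⟩
  have hBbdd : BddBelow Bs := ⟨x, fun z hz => hz.2.le⟩
  set w := sInf Bs with hw
  have hwx : x ≤ w := le_csInf hBne fun z hz => hz.2.le
  have hwL : w ≤ ∑' i, a i := csInf_le hBbdd ⟨hLEm, hxLlt⟩
  have hwE : w ∈ E := by
    by_contra hc2
    have hwI : w ∈ Set.Icc 0 (∑' i, a i) := ⟨hx0.trans hwx, hwL⟩
    have hwU : w ∈ ⋃ n, U n := by
      by_contra hc3
      exact hc2 (hE ▸ ⟨hwI, hc3⟩)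
    obtain ⟨m, hm⟩ := Set.mem_iUnion.mp hwU
    rw [hUn m, Set.mem_Ioo] at hm
    obtain ⟨z, hzB, hzlt⟩ := exists_lt_of_csInf_lt hBne hm.2
    have hzw : w ≤ z := csInf_le hBbdd hzB
    have hzU : z ∈ U m := by
      rw [hUn m, Set.mem_Ioo]
      exact ⟨lt_of_lt_of_le hm.1 hzw, hzlt⟩
    have hzE' := hzB.1
    rw [hE] at hzE'
    exact hzE'.2 (Set.mem_iUnion.mpr ⟨m, hzU⟩)
  rcases eq_or_lt_of_le hwx with heqw | hltw
  · -- w = x : points of E to the right approach x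
    set δ := (y - π x) / c with hδ
    have hδ0 : 0 < δ := div_pos (by linarith) hc0
    obtain ⟨z, hzB, hzlt⟩ := exists_lt_of_csInf_lt hBne
      (show sInf Bs < x + δ by rw [← hw, ← heqw]; linarith)
    have hzE := hzB.1
    have hzgt : x < z := hzB.2
    have hmz : π x ≤ π z := hmonoE x hxE z hzE hzgt.le
    have hlip := (hblip x hxE z hzE).2
    rw [abs_of_nonpos (by linarith : x - z ≤ 0),
      abs_of_nonpos (by linarith : π x - π z ≤ 0)] at hlip
    have h1 : π z - π x ≤ c * (z - x) := by linarith
    have h2 : c * (z - x) < c * δ := by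
      apply mul_lt_mul_of_pos_left _ hc0
      linarith
    have h3 : c * δ = y - π x := by
      rw [hδ]; field_simp
    have hπzy : π z ≤ y := by linarith
    have : z ≤ x := le_csSup hAbdd ⟨hzE, hπzy⟩
    linarith
  · -- x < w : there is a gap (x, w) = U m
    set mid := (x + w) / 2 with hmid
    have hmid1 : x < mid := by rw [hmid]; linarith
    have hmid2 : mid < w := by rw [hmid]; linarith
    have hmidI : mid ∈ Set.Icc 0 (∑' i, a i) := ⟨by linarith, by linarith⟩
    have hmidE : mid ∉ E := by
      intro hc3
      have : mid ∈ Bs := ⟨hc3, hmid1⟩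
      have := csInf_le hBbdd this
      rw [← hw] at this
      linarith
    have hmidU : mid ∈ ⋃ n, U n := by
      by_contra hc3
      exact hmidE (hE ▸ ⟨hmidI, hc3⟩)
    obtain ⟨m, hm⟩ := Set.mem_iUnion.mp hmidU
    rw [hUn m, Set.mem_Ioo] at hm
    have hpmE := hpE hpq hUn hUsub hUdisj hE m
    have hqmE := hqE hpq hUn hUsub hUdisj hE m
    have hwqm : w ≤ q m := csInf_le hBbdd ⟨hqmE, by linarith [hm.2]⟩
    have hpmx : p m ≤ x := by
      by_contra hc3
      push_neg at hc3
      have : w ≤ p m := csInf_le hBbdd ⟨hpmE, hc3⟩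
      linarith [hm.1]
    have hpmeq : p m = x := by
      have hxU : x ∉ U m := by
        rw [hE] at hxE
        exact fun h => hxE.2 (Set.mem_iUnion.mpr ⟨m, h⟩)
      rw [hUn m, Set.mem_Ioo] at hxU
      push_neg at hxU
      rcases eq_or_lt_of_le hpmx with he | hl
      · exact he
      · exfalso
        have := hxU hl
        linarith [hm.2]
    have hqmeq : q m = w := by
      have hwU : w ∉ U m := by
        rw [hE] at hwE
        exact fun h => hwE.2 (Set.mem_iUnion.mpr ⟨m, h⟩)
      rw [hUn m, Set.mem_Ioo] at hwU
      push_neg at hwU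
      rcases eq_or_lt_of_le hwqm with he | hl
      · exact he.symm
      · exfalso
        have := hwU (by rw [hpmeq]; exact hltw)
        linarith
    have hπqm := hπq hpq hUn hUsub hUdisj hE hb hsb hπ m
    have hyV' := hyV m
    rw [Set.mem_Ioo, hpmeq] at hyV'
    push_neg at hyV'
    have hyw : π (p m) + b m ≤ y := by
      rw [hpmeq]
      exact hyV' hlt
    have hπwy : π w ≤ y := by
      rw [← hqmeq, hπqm, hpmeq]
      rw [hpmeq] at hyw
      exact hyw
    have : w ≤ x := le_csSup hAbdd ⟨hwE, hπwy⟩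
    linarith


end main

end aux

/-- equivalent sequences give bi-Lipschitz corresponding
complementary sets, hence equal Assouad and Lower Assouad dimensions. -/
theorem equivalent_sequences_biLipschitz
    (a b : ℕ → ℝ) (ha : ∀ n, 0 < a n) (hb : ∀ n, 0 < b n)
    (hsa : Summable a) (hsb : Summable b)
    (hequiv : ∃ c : ℝ, 1 ≤ c ∧ ∀ n, c⁻¹ ≤ a n / b n ∧ a n / b n ≤ c)
    (E : Set ℝ) (U : ℕ → Set ℝ)
    (hU : ∀ n, ∃ p q : ℝ, p < q ∧ q - p = a n ∧ U n = Set.Ioo p q)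
    (hUsub : ∀ n, U n ⊆ Set.Icc 0 (∑' i, a i))
    (hUdisj : Pairwise (Function.onFun Disjoint U))
    (hE : E = Set.Icc 0 (∑' i, a i) \ ⋃ n, U n)
    (π : ℝ → ℝ)
    (hπ : ∀ x : ℝ, π x = ∑' n : {n : ℕ // U n ⊆ Set.Icc 0 x}, b n.1) :
    (∃ K : ℝ, 1 ≤ K ∧ ∀ x ∈ E, ∀ y ∈ E,
        K⁻¹ * |x - y| ≤ |π x - π y| ∧ |π x - π y| ≤ K * |x - y|) ∧
    IsComplementarySet b (π '' E) ∧
    dimA (π '' E) = dimA E ∧ dimL (π '' E) = dimL E := by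
  classical
  obtain ⟨c, hc1, hcab⟩ := hequiv
  have hc0 : (0:ℝ) < c := lt_of_lt_of_le one_pos hc1
  choose p q hpq hlen hUn using hU
  have hblip := hbl ha hsa hpq hlen hUn hUsub hUdisj hE hb hsb hπ c hc1 hcab
  have hmonoE := hπmonoE hpq hUn hUsub hE hb hsb hπ
  have hπqn := hπq hpq hUn hUsub hUdisj hE hb hsb hπ
  have hnn := hπnonneg hb hπ (π := π)
  have hub := hπle hb hsb hπ (π := π)
  have hEnotU : ∀ u ∈ E, ∀ n, u ∉ U n := by
    intro u hu n h
    rw [hE] at hu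
    exact hu.2 (Set.mem_iUnion.mpr ⟨n, h⟩)
  -- membership characterization helpers
  have hcmp : IsComplementarySet b (π '' E) := by
    refine ⟨fun n => Set.Ioo (π (p n)) (π (p n) + b n), ?_, ?_, ?_, ?_⟩
    · intro n
      exact ⟨π (p n), π (p n) + b n, by linarith [hb n], by ring, rfl⟩
    · intro n z hz
      rw [Set.mem_Ioo] at hz
      constructor
      · exact (hnn (p n)).trans hz.1.le
      · have : π (p n) + b n = π (q n) := (hπqn n).symm
        rw [this] at hz
        exact hz.2.le.trans (hub (q n))
    · intro m n hmn
      have hord : q m ≤ p n ∨ q n ≤ p m := by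
        by_contra hcon
        push_neg at hcon
        exact hcore hpq hUn hUdisj m n hmn hcon.2 hcon.1
      rw [Function.onFun, Set.disjoint_left]
      intro z hzm hzn
      rw [Set.mem_Ioo] at hzm hzn
      rcases hord with h | h
      · have h1 : π (q m) ≤ π (p n) := hmonoE (q m) (hqE hpq hUn hUsub hUdisj hE m)
          (p n) (hpE hpq hUn hUsub hUdisj hE n) h
        rw [← hπqn m] at hzm
        linarith [hzm.2, hzn.1]
      · have h1 : π (q n) ≤ π (p m) := hmonoE (q n) (hqE hpq hUn hUsub hUdisj hE n)
          (p m) (hpE hpq hUn hUsub hUdisj hE m) h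
        rw [← hπqn n] at hzn
        linarith [hzm.1, hzn.2]
    · ext z
      constructor
      · rintro ⟨u, huE, rfl⟩
        refine ⟨⟨hnn u, hub u⟩, ?_⟩
        intro hc2
        obtain ⟨n, hn⟩ := Set.mem_iUnion.mp hc2
        rw [Set.mem_Ioo] at hn
        have hun1 : p n < u := by
          by_contra hcon
          push_neg at hcon
          have := hmonoE u huE (p n) (hpE hpq hUn hUsub hUdisj hE n) hcon
          linarith [hn.1]
        have hun2 : u < q n := by
          by_contra hcon
          push_neg at hcon
          have := hmonoE (q n) (hqE hpq hUn hUsub hUdisj hE n) u huE hcon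
          rw [← hπqn n] at hn
          linarith [hn.2]
        exact hEnotU u huE n (by rw [hUn n]; exact ⟨hun1, hun2⟩)
      · rintro ⟨hzI, hzV⟩
        have hzV' : ∀ n, z ∉ Set.Ioo (π (p n)) (π (p n) + b n) := by
          intro n hcon
          exact hzV (Set.mem_iUnion.mpr ⟨n, hcon⟩)
        obtain ⟨x, hxE, hπx⟩ := hsurjπ ha hsa hpq hlen hUn hUsub hUdisj hE hb hsb hπ
          c hc1 hcab z hzI hzV'
        exact ⟨x, hxE, hπx⟩
  refine ⟨⟨c, hc1, hblip⟩, hcmp, ?_, ?_⟩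
  -- dimension equalities
  all_goals {
    have hinj : ∀ u ∈ E, ∀ v ∈ E, π u = π v → u = v := by
      intro u hu v hv h
      have h1 := (hblip u hu v hv).1
      rw [h, sub_self, abs_zero] at h1
      have h2 : |u - v| ≤ 0 := by
        have hci : (0:ℝ) < c⁻¹ := by positivity
        nlinarith [abs_nonneg (u - v)]
      have : u - v = 0 := abs_eq_zero.mp (le_antisymm h2 (abs_nonneg _))
      linarith [this]
    set σ : ℝ → ℝ := fun y => if h : ∃ x, x ∈ E ∧ π x = y then h.choose else 0 with hσ
    have hσπ : ∀ x ∈ E, σ (π x) = x := by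
      intro x hx
      have hex : ∃ u, u ∈ E ∧ π u = π x := ⟨x, hx, rfl⟩
      rw [hσ]
      simp only [dif_pos hex]
      exact hinj hex.choose hex.choose_spec.1 x hx hex.choose_spec.2
    have hfF : ∀ x ∈ E, π x ∈ π '' E := fun x hx => ⟨x, hx, rfl⟩
    have hsurjF : ∀ y ∈ π '' E, ∃ x ∈ E, π x = y := by
      rintro y ⟨x, hx, rfl⟩; exact ⟨x, hx, rfl⟩
    have hπLip : ∀ v ∈ E, ∀ w ∈ E, |π v - π w| ≤ c * |v - w| :=
      fun v hv w hw => (hblip v hv w hw).2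
    have hσLip : ∀ v ∈ π '' E, ∀ w ∈ π '' E, |σ v - σ w| ≤ c * |v - w| := by
      rintro v ⟨u, hu, rfl⟩ w ⟨u', hu', rfl⟩
      rw [hσπ u hu, hσπ u' hu']
      have h1 := (hblip u hu u' hu').1
      have hci : (0:ℝ) < c⁻¹ := by positivity
      calc |u - u'| = c * (c⁻¹ * |u - u'|) := by field_simp
        _ ≤ c * |π u - π u'| := by
            apply mul_le_mul_of_nonneg_left h1 hc0.le
    have hgf2 : ∀ y ∈ π '' E, π (σ y) = y := by
      rintro y ⟨x, hx, rfl⟩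
      rw [hσπ x hx]
    have hσE : ∀ y ∈ π '' E, σ y ∈ E := by
      rintro y ⟨x, hx, rfl⟩
      rw [hσπ x hx]; exact hx
    have hsurjE : ∀ x ∈ E, ∃ y ∈ π '' E, σ y = x := by
      intro x hx
      exact ⟨π x, hfF x hx, hσπ x hx⟩
    first
    | · show dimA (π '' E) = dimA E
        have h1 : setA E ⊆ setA (π '' E) :=
          setA_mono E (π '' E) π σ c hc1 hfF hσπ hsurjF hπLip hσLip
        have h2 : setA (π '' E) ⊆ setA E :=
          setA_mono (π '' E) E σ π c hc1 hσE hgf2 hsurjE hσLip hπLip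
        show sInf (setA (π '' E)) = sInf (setA E)
        rw [Set.Subset.antisymm h2 h1]
    | · show dimL (π '' E) = dimL E
        have h1 : setL E ⊆ setL (π '' E) :=
          setL_mono E (π '' E) π σ c hc1 hfF hσπ hsurjF hπLip hσLip
        have h2 : setL (π '' E) ⊆ setL E :=
          setL_mono (π '' E) E σ π c hc1 hσE hgf2 hsurjE hσLip hπLip
        show sSup (setL (π '' E)) = sSup (setL E)
        rw [Set.Subset.antisymm h2 h1]
  }
end

section
/- Let a be a positive, decreasing, summable sequence and C_a the associated Cantor set. Then dim_L C_a = sup{β : there exist k_β and n_β such that for all k ≥ k_β and all n ≥ n_β, (n log 2)/log(s_k/s_{k+n}) ≥ β}. -/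
open scoped BigOperators
open Set

namespace CantorAux
open Finset Filter Topology

/-- tail sum of `a` starting at index `N` -/
noncomputable def tailN (a : ℕ → ℝ) (N : ℕ) : ℝ := ∑' j, a (N + j)

/-- sum of the `t`-th dyadic block -/
noncomputable def block (a : ℕ → ℝ) (t : ℕ) : ℝ :=
  ∑ i ∈ Finset.range (2 ^ t), a (2 ^ t - 1 + i)

/-- summand of `cantorLen` -/
noncomputable def g (a : ℕ → ℝ) (k j m : ℕ) : ℝ :=
  ∑ i ∈ Finset.range (2 ^ m), a (2 ^ (k + m) - 1 + 2 ^ m * j + i)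

lemma cantorLen_eq (a : ℕ → ℝ) (k j : ℕ) : cantorLen a k j = ∑' m, g a k j m := rfl

lemma avg_eq (a : ℕ → ℝ) (k : ℕ) : avgLen a k = tailN a (2 ^ k - 1) / 2 ^ k := rfl

variable {a : ℕ → ℝ}

lemma summable_shift (hsum : Summable a) (N : ℕ) : Summable fun j => a (N + j) := by
  simpa [add_comm] using (summable_nat_add_iff (f := a) N).2 hsum

lemma tailN_nonneg (hpos : ∀ n, 0 < a n) (N : ℕ) : 0 ≤ tailN a N :=
  tsum_nonneg fun j => (hpos _).le

lemma tailN_pos (hpos : ∀ n, 0 < a n) (hsum : Summable a) (N : ℕ) : 0 < tailN a N := by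
  have h := Summable.le_tsum (summable_shift hsum N) 0 (fun j _ => (hpos _).le)
  simpa [tailN] using lt_of_lt_of_le (hpos (N + 0)) h

lemma tailN_add (hsum : Summable a) (N d : ℕ) :
    tailN a N = (∑ i ∈ Finset.range d, a (N + i)) + tailN a (N + d) := by
  have h := Summable.sum_add_tsum_nat_add (f := fun j => a (N + j)) d (summable_shift hsum N)
  rw [tailN, ← h]
  congr 1
  unfold tailN
  exact tsum_congr fun i => congrArg a (show N + (i + d) = N + d + i by omega)

lemma tailN_le (hpos : ∀ n, 0 < a n) (hsum : Summable a) {N M : ℕ} (h : N ≤ M) :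
    tailN a M ≤ tailN a N := by
  obtain ⟨d, rfl⟩ := Nat.exists_eq_add_of_le h
  have := tailN_add hsum N d
  have hs : 0 ≤ ∑ i ∈ Finset.range d, a (N + i) :=
    Finset.sum_nonneg fun i _ => (hpos _).le
  linarith

lemma tailN_tendsto (hsum : Summable a) : Tendsto (tailN a) atTop (𝓝 0) := by
  have h := tendsto_sum_nat_add a
  have : (fun i => ∑' (k : ℕ), a (k + i)) = tailN a := by
    funext i; exact tsum_congr fun k => by rw [add_comm]
  rwa [this] at h

lemma tailN_block (hsum : Summable a) (t : ℕ) :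
    tailN a (2 ^ t - 1) = block a t + tailN a (2 ^ (t + 1) - 1) := by
  have h := tailN_add hsum (2 ^ t - 1) (2 ^ t)
  have h1 : (1:ℕ) ≤ 2 ^ t := Nat.one_le_two_pow
  have h2 : 2 ^ t - 1 + 2 ^ t = 2 ^ (t + 1) - 1 := by
    have : (2:ℕ) ^ (t+1) = 2 ^ t * 2 := pow_succ 2 t
    omega
  rw [h, h2]; rfl

lemma blocksum (hsum : Summable a) (k M : ℕ) :
    (∑ m ∈ Finset.range M, block a (k + m)) + tailN a (2 ^ (k + M) - 1)
      = tailN a (2 ^ k - 1) := by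
  induction M with
  | zero => simp
  | succ M ih =>
      rw [Finset.sum_range_succ]
      have := tailN_block hsum (k + M)
      have e : k + (M + 1) = (k + M) + 1 := by omega
      rw [e]
      linarith

lemma block_nonneg (hpos : ∀ n, 0 < a n) (t : ℕ) : 0 ≤ block a t :=
  Finset.sum_nonneg fun i _ => (hpos _).le

lemma summable_block_shift (hpos : ∀ n, 0 < a n) (hsum : Summable a) (k : ℕ) :
    Summable fun m => block a (k + m) := by
  refine summable_of_sum_range_le (c := tailN a (2 ^ k - 1)) (fun m => block_nonneg hpos _) (fun M => ?_)
  have h := blocksum hsum k M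
  have := tailN_nonneg hpos (2 ^ (k + M) - 1)
  linarith [le_refl (tailN a (2 ^ k - 1))]

lemma tendsto_tail_pow (hpos : ∀ n, 0 < a n) (hsum : Summable a) (k : ℕ) :
    Tendsto (fun M => tailN a (2 ^ (k + M) - 1)) atTop (𝓝 0) := by
  refine squeeze_zero (fun M => tailN_nonneg hpos _) (fun M => ?_) (tailN_tendsto hsum)
  refine tailN_le hpos hsum ?_
  have h1 := (Nat.lt_two_pow_self (n := M))
  have h2 : 2 ^ M ≤ 2 ^ (k + M) := Nat.pow_le_pow_right (by norm_num) (by omega)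
  omega

lemma tailN_eq_tsum_block (hpos : ∀ n, 0 < a n) (hsum : Summable a) (k : ℕ) :
    tailN a (2 ^ k - 1) = ∑' m, block a (k + m) := by
  have hs := summable_block_shift hpos hsum k
  refine (HasSum.tsum_eq ?_).symm
  rw [hs.hasSum_iff_tendsto_nat]
  have e : (fun M => ∑ m ∈ Finset.range M, block a (k + m))
      = fun M => tailN a (2 ^ k - 1) - tailN a (2 ^ (k + M) - 1) := by
    funext M; have := blocksum hsum k M; linarith
  rw [e]
  simpa using tendsto_const_nhds.sub (tendsto_tail_pow hpos hsum k)

end CantorAux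
namespace CantorAux
open Finset Filter Topology

variable {a : ℕ → ℝ}

lemma g_nonneg (hpos : ∀ n, 0 < a n) (k j m : ℕ) : 0 ≤ g a k j m :=
  Finset.sum_nonneg fun i _ => (hpos _).le

lemma g_as_Ico (a : ℕ → ℝ) (k j m : ℕ) :
    g a k j m = ∑ i ∈ Finset.Ico (2 ^ m * j) (2 ^ m * j + 2 ^ m), a (2 ^ (k + m) - 1 + i) := by
  rw [Finset.sum_Ico_eq_sum_range]
  simp only [Nat.add_sub_cancel_left]
  exact Finset.sum_congr rfl fun i _ => congrArg a (by omega)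

lemma g_le_block (hpos : ∀ n, 0 < a n) (k j m : ℕ) (hj : j < 2 ^ k) :
    g a k j m ≤ block a (k + m) := by
  rw [g_as_Ico, block, Finset.range_eq_Ico]
  refine Finset.sum_le_sum_of_subset_of_nonneg ?_ (fun i _ _ => (hpos _).le)
  refine Finset.Ico_subset_Ico (Nat.zero_le _) ?_
  have : 2 ^ m * j + 2 ^ m ≤ 2 ^ m * 2 ^ k := by
    have : j + 1 ≤ 2 ^ k := hj
    nlinarith [Nat.one_le_two_pow (n := m)]
  calc 2 ^ m * j + 2 ^ m ≤ 2 ^ m * 2 ^ k := this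
    _ = 2 ^ (k + m) := by rw [← pow_add]; ring_nf

lemma summable_g (hpos : ∀ n, 0 < a n) (hsum : Summable a) (k j : ℕ) (hj : j < 2 ^ k) :
    Summable (g a k j) :=
  Summable.of_nonneg_of_le (g_nonneg hpos k j) (fun m => g_le_block hpos k j m hj)
    (summable_block_shift hpos hsum k)

lemma len_nonneg (hpos : ∀ n, 0 < a n) (k j : ℕ) : 0 ≤ cantorLen a k j := by
  rw [cantorLen_eq]; exact tsum_nonneg fun m => g_nonneg hpos k j m

lemma g_zero (a : ℕ → ℝ) (k j : ℕ) : g a k j 0 = a (2 ^ k - 1 + j) := by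
  simp [g]

lemma gap_le_len (hpos : ∀ n, 0 < a n) (hsum : Summable a) {k j : ℕ} (hj : j < 2 ^ k) :
    a (2 ^ k - 1 + j) ≤ cantorLen a k j := by
  rw [cantorLen_eq, ← g_zero a k j]
  exact Summable.le_tsum (summable_g hpos hsum k j hj) 0 fun m _ => g_nonneg hpos k j m

lemma len_pos (hpos : ∀ n, 0 < a n) (hsum : Summable a) {k j : ℕ} (hj : j < 2 ^ k) :
    0 < cantorLen a k j :=
  lt_of_lt_of_le (hpos _) (gap_le_len hpos hsum hj)

lemma len_mono_j (hpos : ∀ n, 0 < a n) (hdec : Antitone a) (hsum : Summable a)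
    {k j j' : ℕ} (hj' : j' < 2 ^ k) (hjj : j ≤ j') :
    cantorLen a k j' ≤ cantorLen a k j := by
  rw [cantorLen_eq, cantorLen_eq]
  refine Summable.tsum_le_tsum (fun m => ?_) (summable_g hpos hsum k j' hj')
    (summable_g hpos hsum k j (lt_of_le_of_lt hjj hj'))
  refine Finset.sum_le_sum fun i _ => hdec ?_
  have : 2 ^ m * j ≤ 2 ^ m * j' := Nat.mul_le_mul_left _ hjj
  omega

lemma avg_pos (hpos : ∀ n, 0 < a n) (hsum : Summable a) (k : ℕ) : 0 < avgLen a k := by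
  rw [avg_eq]
  exact div_pos (tailN_pos hpos hsum _) (by positivity)

lemma avg_half (hpos : ∀ n, 0 < a n) (hsum : Summable a) (k : ℕ) :
    avgLen a (k + 1) ≤ avgLen a k / 2 := by
  rw [avg_eq, avg_eq]
  have h := tailN_le hpos hsum (show 2 ^ k - 1 ≤ 2 ^ (k+1) - 1 by
    have : (2:ℕ) ^ k ≤ 2 ^ (k+1) := Nat.pow_le_pow_right (by norm_num) (by omega); omega)
  have h2 : (0:ℝ) < 2 ^ k := by positivity
  rw [div_div, ← pow_succ]
  gcongr

lemma avg_anti (hpos : ∀ n, 0 < a n) (hsum : Summable a) {u v : ℕ} (h : u ≤ v) :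
    avgLen a v ≤ avgLen a u := by
  induction v with
  | zero => simp_all
  | succ v ih =>
      rcases Nat.lt_or_ge u (v+1) with h' | h'
      · have := avg_half hpos hsum v
        have h3 := ih (by omega)
        have := avg_pos hpos hsum v
        linarith
      · have : u = v + 1 := by omega
        subst this; rfl

lemma avg_pow (hpos : ∀ n, 0 < a n) (hsum : Summable a) (u n : ℕ) :
    avgLen a (u + n) ≤ avgLen a u / 2 ^ n := by
  induction n with
  | zero => simp
  | succ n ih =>
      have h := avg_half hpos hsum (u + n)
      have : avgLen a (u + n) / 2 ≤ avgLen a u / 2 ^ n / 2 := by linarith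
      calc avgLen a (u + (n+1)) = avgLen a ((u + n) + 1) := by ring_nf
        _ ≤ avgLen a (u + n) / 2 := h
        _ ≤ avgLen a u / 2 ^ n / 2 := this
        _ = avgLen a u / 2 ^ (n+1) := by rw [div_div, ← pow_succ]

lemma avg_le_of_tail0 (hpos : ∀ n, 0 < a n) (hsum : Summable a) (k : ℕ) :
    avgLen a k ≤ tailN a 0 / 2 ^ k := by
  rw [avg_eq]
  have := tailN_le hpos hsum (Nat.zero_le (2 ^ k - 1))
  have h2 : (0:ℝ) < 2 ^ k := by positivity
  gcongr

end CantorAux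
namespace CantorAux
open Finset Filter Topology

variable {a : ℕ → ℝ}

lemma g_zero_j (a : ℕ → ℝ) (k m : ℕ) :
    g a k 0 m = ∑ i ∈ Finset.range (2 ^ m), a (2 ^ (k + m) - 1 + i) := by
  rw [g]; exact Finset.sum_congr rfl fun i _ => congrArg a (by omega)

lemma g_succ_le (hdec : Antitone a) (k m : ℕ) :
    (2:ℝ) ^ k * g a (k + 1) 0 m ≤ block a (k + m) := by
  set c := a (2 ^ (k + m + 1) - 1) with hc
  have hub : g a (k + 1) 0 m ≤ (2:ℝ) ^ m * c := by
    rw [g_zero_j]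
    calc ∑ i ∈ Finset.range (2 ^ m), a (2 ^ (k + 1 + m) - 1 + i)
        ≤ ∑ i ∈ Finset.range (2 ^ m), c := by
          refine Finset.sum_le_sum fun i _ => hdec ?_
          have e : (2:ℕ) ^ (k + 1 + m) = 2 ^ (k + m + 1) := by
            rw [show k + 1 + m = k + m + 1 from by omega]
          omega
      _ = (2:ℝ) ^ m * c := by
          rw [Finset.sum_const, Finset.card_range, nsmul_eq_mul]; push_cast; ring
  have hlb : (2:ℝ) ^ (k + m) * c ≤ block a (k + m) := by
    rw [block]
    calc (2:ℝ) ^ (k + m) * c = ∑ _i ∈ Finset.range (2 ^ (k + m)), c := by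
          rw [Finset.sum_const, Finset.card_range, nsmul_eq_mul]; push_cast; ring
      _ ≤ ∑ i ∈ Finset.range (2 ^ (k + m)), a (2 ^ (k + m) - 1 + i) := by
          refine Finset.sum_le_sum fun i hi => hdec ?_
          have h1 : (2:ℕ) ^ (k + m + 1) = 2 ^ (k + m) * 2 := pow_succ 2 (k + m)
          have h2 : i < 2 ^ (k + m) := Finset.mem_range.1 hi
          have h3 : (1:ℕ) ≤ 2 ^ (k + m) := Nat.one_le_two_pow
          omega
  have hp : (2:ℝ) ^ (k + m) = 2 ^ k * 2 ^ m := pow_add 2 k m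
  have hg : (0:ℝ) ≤ 2 ^ k := by positivity
  calc (2:ℝ) ^ k * g a (k + 1) 0 m ≤ 2 ^ k * ((2:ℝ) ^ m * c) := by
        exact mul_le_mul_of_nonneg_left hub hg
    _ = (2:ℝ) ^ (k + m) * c := by rw [hp]; ring
    _ ≤ block a (k + m) := hlb

lemma len_succ_le_avg (hpos : ∀ n, 0 < a n) (hdec : Antitone a) (hsum : Summable a) (k : ℕ) :
    cantorLen a (k + 1) 0 ≤ avgLen a k := by
  rw [cantorLen_eq, avg_eq, tailN_eq_tsum_block hpos hsum k, le_div_iff₀ (by positivity)]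
  rw [← tsum_mul_right]
  refine Summable.tsum_le_tsum (fun m => ?_)
    ((summable_g hpos hsum (k+1) 0 (by positivity)).mul_right _)
    (summable_block_shift hpos hsum k)
  have := g_succ_le hdec (a := a) k m
  linarith

lemma block_le_g0 (hpos : ∀ n, 0 < a n) (hdec : Antitone a) (k m : ℕ) :
    block a (k + m) ≤ (2:ℝ) ^ k * g a k 0 m := by
  have h2 : (2:ℕ) ^ m ≤ 2 ^ (k + m) := Nat.pow_le_pow_right (by norm_num) (by omega)
  set c := a (2 ^ (k + m) - 1 + 2 ^ m) with hc
  have key : block a (k + m) = g a k 0 m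
      + ∑ i ∈ Finset.range (2 ^ (k + m) - 2 ^ m), a (2 ^ (k + m) - 1 + (2 ^ m + i)) := by
    rw [block, g_zero_j, ← Finset.sum_range_add]
    congr 2
    omega
  have hrest : ∑ i ∈ Finset.range (2 ^ (k + m) - 2 ^ m), a (2 ^ (k + m) - 1 + (2 ^ m + i))
      ≤ ((2:ℝ) ^ (k + m) - 2 ^ m) * c := by
    calc ∑ i ∈ Finset.range (2 ^ (k + m) - 2 ^ m), a (2 ^ (k + m) - 1 + (2 ^ m + i))
        ≤ ∑ _i ∈ Finset.range (2 ^ (k + m) - 2 ^ m), c :=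
          Finset.sum_le_sum fun i _ => hdec (by omega)
      _ = ((2:ℝ) ^ (k + m) - 2 ^ m) * c := by
          rw [Finset.sum_const, Finset.card_range, nsmul_eq_mul, Nat.cast_sub h2]
          push_cast; ring
  have hpre : (2:ℝ) ^ m * c ≤ g a k 0 m := by
    rw [g_zero_j]
    calc (2:ℝ) ^ m * c = ∑ _i ∈ Finset.range (2 ^ m), c := by
          rw [Finset.sum_const, Finset.card_range, nsmul_eq_mul]; push_cast; ring
      _ ≤ ∑ i ∈ Finset.range (2 ^ m), a (2 ^ (k + m) - 1 + i) :=
          Finset.sum_le_sum fun i hi => hdec (by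
            have := Finset.mem_range.1 hi; omega)
  have hp : (2:ℝ) ^ (k + m) = 2 ^ k * 2 ^ m := pow_add 2 k m
  have h1 : (1:ℝ) ≤ 2 ^ k := by exact_mod_cast (Nat.one_le_two_pow : 1 ≤ 2 ^ k)
  have hg : 0 ≤ g a k 0 m := g_nonneg hpos k 0 m
  have hmono : ((2:ℝ) ^ (k + m) - 2 ^ m) * c ≤ (2 ^ k - 1) * g a k 0 m := by
    calc ((2:ℝ) ^ (k + m) - 2 ^ m) * c = (2 ^ k - 1) * ((2:ℝ) ^ m * c) := by rw [hp]; ring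
      _ ≤ (2 ^ k - 1) * g a k 0 m :=
          mul_le_mul_of_nonneg_left hpre (by linarith)
  linarith [key, hrest, hmono]

lemma avg_le_len0 (hpos : ∀ n, 0 < a n) (hdec : Antitone a) (hsum : Summable a) (k : ℕ) :
    avgLen a k ≤ cantorLen a k 0 := by
  rw [avg_eq, tailN_eq_tsum_block hpos hsum k, cantorLen_eq, div_le_iff₀ (by positivity)]
  rw [← tsum_mul_right]
  refine Summable.tsum_le_tsum (fun m => ?_) (summable_block_shift hpos hsum k)
    ((summable_g hpos hsum k 0 (by positivity)).mul_right _)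
  have := block_le_g0 hpos hdec (a := a) k m
  linarith

lemma block_succ_le_g (hpos : ∀ n, 0 < a n) (hdec : Antitone a) {k j : ℕ} (hj : j < 2 ^ k)
    (m : ℕ) : block a (k + 1 + m) ≤ (2:ℝ) ^ (k + 1) * g a k j m := by
  set c := a (2 ^ (k + m + 1) - 2) with hc
  have hmul : 2 ^ m * (j + 1) ≤ 2 ^ (k + m) := by
    calc 2 ^ m * (j + 1) ≤ 2 ^ m * 2 ^ k := Nat.mul_le_mul_left _ hj
      _ = 2 ^ (k + m) := by rw [← pow_add]; ring_nf
  have hpre : (2:ℝ) ^ m * c ≤ g a k j m := by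
    rw [g]
    calc (2:ℝ) ^ m * c = ∑ _i ∈ Finset.range (2 ^ m), c := by
          rw [Finset.sum_const, Finset.card_range, nsmul_eq_mul]; push_cast; ring
      _ ≤ ∑ i ∈ Finset.range (2 ^ m), a (2 ^ (k + m) - 1 + 2 ^ m * j + i) := by
          refine Finset.sum_le_sum fun i hi => hdec ?_
          have h1 := Finset.mem_range.1 hi
          have h4 : (2:ℕ) ^ (k + m + 1) = 2 ^ (k + m) * 2 := pow_succ 2 (k + m)
          have h5 : (1:ℕ) ≤ 2 ^ (k + m) := Nat.one_le_two_pow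
          have h6 : 2 ^ m * (j + 1) = 2 ^ m * j + 2 ^ m := by ring
          omega
  have hub : block a (k + 1 + m) ≤ (2:ℝ) ^ (k + m + 1) * c := by
    rw [block]
    calc ∑ i ∈ Finset.range (2 ^ (k + 1 + m)), a (2 ^ (k + 1 + m) - 1 + i)
        ≤ ∑ _i ∈ Finset.range (2 ^ (k + 1 + m)), c := by
          refine Finset.sum_le_sum fun i _ => hdec ?_
          have e : (2:ℕ) ^ (k + 1 + m) = 2 ^ (k + m + 1) := by
            rw [show k + 1 + m = k + m + 1 from by omega]
          omega
      _ = (2:ℝ) ^ (k + m + 1) * c := by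
          rw [Finset.sum_const, Finset.card_range, nsmul_eq_mul]
          rw [show k + 1 + m = k + m + 1 from by omega]; push_cast; ring
  have hp : (2:ℝ) ^ (k + m + 1) = 2 ^ (k + 1) * 2 ^ m := by
    rw [← pow_add]; ring_nf
  calc block a (k + 1 + m) ≤ (2:ℝ) ^ (k + m + 1) * c := hub
    _ = (2:ℝ) ^ (k + 1) * ((2:ℝ) ^ m * c) := by rw [hp]; ring
    _ ≤ (2:ℝ) ^ (k + 1) * g a k j m := by
        refine mul_le_mul_of_nonneg_left hpre (by positivity)

lemma avg_succ_le_len (hpos : ∀ n, 0 < a n) (hdec : Antitone a) (hsum : Summable a)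
    {k j : ℕ} (hj : j < 2 ^ k) : avgLen a (k + 1) ≤ cantorLen a k j := by
  rw [avg_eq, tailN_eq_tsum_block hpos hsum (k + 1), cantorLen_eq, div_le_iff₀ (by positivity)]
  rw [← tsum_mul_right]
  refine Summable.tsum_le_tsum (fun m => ?_) (summable_block_shift hpos hsum (k + 1))
    ((summable_g hpos hsum k j hj).mul_right _)
  have := block_succ_le_g hpos hdec (a := a) hj m
  linarith

end CantorAux
namespace CantorAux
open Finset Filter Topology

variable {a : ℕ → ℝ}

lemma g_succ_split (a : ℕ → ℝ) (k j m : ℕ) :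
    g a k j (m + 1) = g a (k + 1) (2 * j) m + g a (k + 1) (2 * j + 1) m := by
  have hL : ∀ i : ℕ, 2 ^ (k + (m+1)) - 1 + 2 ^ (m+1) * j + i
      = 2 ^ ((k+1) + m) - 1 + 2 ^ m * (2 * j) + i := by
    intro i
    have e1 : k + (m+1) = (k+1) + m := by omega
    have e2 : 2 ^ (m+1) * j = 2 ^ m * (2 * j) := by rw [pow_succ]; ring
    rw [e1, e2]
  have hR : ∀ i : ℕ, 2 ^ (k + (m+1)) - 1 + 2 ^ (m+1) * j + (2 ^ m + i)
      = 2 ^ ((k+1) + m) - 1 + 2 ^ m * (2 * j + 1) + i := by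
    intro i
    have e1 : k + (m+1) = (k+1) + m := by omega
    have e2 : 2 ^ (m+1) * j = 2 ^ m * (2 * j) := by rw [pow_succ]; ring
    have e3 : 2 ^ m * (2 * j + 1) = 2 ^ m * (2 * j) + 2 ^ m := by ring
    rw [e1, e2, e3]; omega
  have e : (2:ℕ) ^ (m+1) = 2 ^ m + 2 ^ m := by rw [pow_succ]; ring
  rw [g, g, g]
  calc ∑ i ∈ Finset.range (2 ^ (m+1)), a (2 ^ (k + (m+1)) - 1 + 2 ^ (m+1) * j + i)
      = ∑ i ∈ Finset.range (2 ^ m + 2 ^ m), a (2 ^ (k + (m+1)) - 1 + 2 ^ (m+1) * j + i) :=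
        Finset.sum_congr (by rw [e]) (fun i _ => rfl)
    _ = (∑ i ∈ Finset.range (2 ^ m), a (2 ^ (k + (m+1)) - 1 + 2 ^ (m+1) * j + i))
        + ∑ i ∈ Finset.range (2 ^ m), a (2 ^ (k + (m+1)) - 1 + 2 ^ (m+1) * j + (2 ^ m + i)) :=
        Finset.sum_range_add _ _ _
    _ = _ := by
        congr 1
        · exact Finset.sum_congr rfl fun i _ => congrArg a (hL i)
        · exact Finset.sum_congr rfl fun i _ => congrArg a (hR i)

lemma len_split (hpos : ∀ n, 0 < a n) (hsum : Summable a) {k j : ℕ} (hj : j < 2 ^ k) :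
    cantorLen a k j
      = a (2 ^ k - 1 + j) + cantorLen a (k + 1) (2 * j) + cantorLen a (k + 1) (2 * j + 1) := by
  have hsg := summable_g hpos hsum k j hj
  have hj1 : 2 * j < 2 ^ (k + 1) := by have h := hj; rw [pow_succ]; omega
  have hj2 : 2 * j + 1 < 2 ^ (k + 1) := by have h := hj; rw [pow_succ]; omega
  have h1 := summable_g hpos hsum (k+1) (2*j) hj1
  have h2 := summable_g hpos hsum (k+1) (2*j+1) hj2
  rw [cantorLen_eq, Summable.tsum_eq_zero_add hsg, g_zero]
  rw [cantorLen_eq, cantorLen_eq]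
  have h3 : ∑' m, g a k j (m+1) = ∑' m, (g a (k+1) (2*j) m + g a (k+1) (2*j+1) m) :=
    tsum_congr fun m => g_succ_split a k j m
  rw [h3, Summable.tsum_add h1 h2]
  ring

lemma left_even (a : ℕ → ℝ) (k j : ℕ) : cantorLeft a (k + 1) (2 * j) = cantorLeft a k j := by
  have h1 : (2 * j) % 2 = 0 := by omega
  have h2 : (2 * j) / 2 = j := by omega
  simp [cantorLeft, h1, h2]

lemma left_odd (a : ℕ → ℝ) (k j : ℕ) :
    cantorLeft a (k + 1) (2 * j + 1)
      = cantorLeft a k j + cantorLen a (k + 1) (2 * j) + a (2 ^ k - 1 + j) := by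
  have h1 : (2 * j + 1) % 2 = 1 := by omega
  have h2 : (2 * j + 1) / 2 = j := by omega
  have h3 : 2 * j + 1 - 1 = 2 * j := by omega
  simp [cantorLeft, h1, h2, h3]

end CantorAux
namespace CantorAux
open Finset Filter Topology

variable {a : ℕ → ℝ}

lemma left_nonneg (hpos : ∀ n, 0 < a n) : ∀ k j, 0 ≤ cantorLeft a k j := by
  intro k
  induction k with
  | zero => intro j; simp [cantorLeft]
  | succ k ih =>
      intro j
      rcases Nat.even_or_odd j with ⟨i, hi⟩ | ⟨i, hi⟩
      · subst hi
        rw [show i + i = 2 * i from by ring, left_even]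
        exact ih i
      · subst hi
        rw [left_odd]
        have := ih i
        have := len_nonneg hpos (k+1) (2*i)
        have := (hpos (2 ^ k - 1 + i)).le
        linarith

lemma right_odd (hpos : ∀ n, 0 < a n) (hsum : Summable a) {k j : ℕ} (hj : j < 2 ^ k) :
    cantorLeft a (k + 1) (2 * j + 1) + cantorLen a (k + 1) (2 * j + 1)
      = cantorLeft a k j + cantorLen a k j := by
  rw [left_odd, len_split hpos hsum hj]
  ring

/-- strict ordering of consecutive step-`k` intervals -/
lemma right_lt_left_succ (hpos : ∀ n, 0 < a n) (hsum : Summable a) :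
    ∀ k j, j + 1 < 2 ^ k →
      cantorLeft a k j + cantorLen a k j < cantorLeft a k (j + 1) := by
  intro k
  induction k with
  | zero => intro j hj; simp at hj
  | succ k ih =>
      intro j hj
      rcases Nat.even_or_odd j with ⟨i, hi⟩ | ⟨i, hi⟩
      · subst hi
        rw [show i + i = 2 * i from by ring] at hj ⊢
        rw [show 2 * i + 1 = 2 * i + 1 from rfl, left_odd, left_even]
        have h1 := hpos (2 ^ k - 1 + i)
        have h2 := left_even a k i
        linarith [le_refl (cantorLen a (k+1) (2*i))]
      · subst hi
        rw [show 2 * i + 1 + 1 = 2 * (i + 1) from by ring, left_even]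
        have hik : i + 1 < 2 ^ k := by
          have h := hj
          rw [pow_succ] at h
          omega
        have h1 := right_odd hpos hsum (k := k) (j := i) (by omega : i < 2 ^ k)
        rw [h1]
        exact ih i hik

lemma left_mono (hpos : ∀ n, 0 < a n) (hsum : Summable a) {k j j' : ℕ}
    (hj' : j' < 2 ^ k) (h : j ≤ j') : cantorLeft a k j ≤ cantorLeft a k j' := by
  obtain ⟨d, rfl⟩ := Nat.exists_eq_add_of_le h
  clear h
  induction d with
  | zero => simp
  | succ d ih =>
      have hd : j + d + 1 < 2 ^ k := by omega
      have h1 := right_lt_left_succ hpos hsum k (j + d) hd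
      have h2 := len_nonneg hpos k (j + d)
      have h3 := ih (by omega)
      have e : j + (d + 1) = (j + d) + 1 := by omega
      rw [e]
      linarith

/-- one-step nesting: `I^{k+1}_j ⊆ I^k_{j/2}` -/
lemma nest (hpos : ∀ n, 0 < a n) (hsum : Summable a) {k j : ℕ} (hj : j < 2 ^ (k + 1)) :
    cantorLeft a k (j / 2) ≤ cantorLeft a (k + 1) j ∧
      cantorLeft a (k + 1) j + cantorLen a (k + 1) j
        ≤ cantorLeft a k (j / 2) + cantorLen a k (j / 2) := by
  have hj2 : j / 2 < 2 ^ k := by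
    rw [pow_succ] at hj; omega
  rcases Nat.even_or_odd j with ⟨i, hi⟩ | ⟨i, hi⟩
  · have hi' : j = 2 * i := by omega
    subst hi'
    have hd : 2 * i / 2 = i := by omega
    rw [hd, left_even]
    have hik : i < 2 ^ k := by rwa [hd] at hj2
    have hsplit := len_split hpos hsum (j := i) (k := k) hik
    have h1 := len_nonneg hpos (k+1) (2*i+1)
    have h2 := (hpos (2 ^ k - 1 + i)).le
    exact ⟨le_refl _, by linarith⟩
  · subst hi
    have hd : (2 * i + 1) / 2 = i := by omega
    rw [hd]
    have hik : i < 2 ^ k := by rwa [hd] at hj2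
    have hro := right_odd hpos hsum (k := k) (j := i) hik
    have h1 := len_nonneg hpos (k+1) (2*i)
    have h2 := (hpos (2 ^ k - 1 + i)).le
    rw [left_odd] at hro ⊢
    constructor
    · linarith [len_nonneg hpos (k+1) (2*i+1)]
    · linarith

lemma nest_iter (hpos : ∀ n, 0 < a n) (hsum : Summable a) (k : ℕ) :
    ∀ d j, j < 2 ^ (k + d) →
      cantorLeft a k (j / 2 ^ d) ≤ cantorLeft a (k + d) j ∧
        cantorLeft a (k + d) j + cantorLen a (k + d) j
          ≤ cantorLeft a k (j / 2 ^ d) + cantorLen a k (j / 2 ^ d) := by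
  intro d
  induction d with
  | zero => intro j hj; simp
  | succ d ih =>
      intro j hj
      have hp : (2:ℕ) ^ (k + (d + 1)) = 2 ^ (k + d) * 2 := by
        rw [show k + (d + 1) = (k + d) + 1 from rfl, pow_succ]
      have h1 := nest hpos hsum (k := k + d) (j := j) (by omega)
      have h2 := ih (j / 2) (by omega)
      have e : j / 2 / 2 ^ d = j / 2 ^ (d + 1) := by
        rw [Nat.div_div_eq_div_mul, pow_succ']
      rw [e] at h2
      exact ⟨le_trans h2.1 h1.1, le_trans h1.2 h2.2⟩

lemma left_zero (a : ℕ → ℝ) : ∀ k, cantorLeft a k 0 = 0 := by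
  intro k
  induction k with
  | zero => rfl
  | succ k ih => rw [show (0:ℕ) = 2 * 0 from rfl, left_even]; exact ih

lemma left_shift_pow (a : ℕ → ℝ) (k j : ℕ) :
    ∀ n, cantorLeft a (k + n) (2 ^ n * j) = cantorLeft a k j := by
  intro n
  induction n with
  | zero => simp
  | succ n ih =>
      have e : 2 ^ (n + 1) * j = 2 * (2 ^ n * j) := by ring
      rw [e]
      show cantorLeft a ((k + n) + 1) (2 * (2 ^ n * j)) = cantorLeft a k j
      rw [left_even]
      exact ih

lemma mem_level_iff (a : ℕ → ℝ) (x : ℝ) :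
    x ∈ assocCantor a ↔ ∀ k, ∃ j, j < 2 ^ k ∧
      x ∈ Set.Icc (cantorLeft a k j) (cantorLeft a k j + cantorLen a k j) := by
  rw [assocCantor]
  simp only [Set.mem_iInter, Set.mem_iUnion, Finset.mem_range, exists_prop]

lemma left_mem_assocCantor (hpos : ∀ n, 0 < a n) (hdec : Antitone a) (hsum : Summable a)
    {k j : ℕ} (hj : j < 2 ^ k) : cantorLeft a k j ∈ assocCantor a := by
  rw [mem_level_iff]
  intro m
  rcases le_or_gt k m with h | h
  · obtain ⟨d, rfl⟩ := Nat.exists_eq_add_of_le h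
    refine ⟨2 ^ d * j, ?_, ?_⟩
    · calc 2 ^ d * j < 2 ^ d * 2 ^ k := by
            have hd : (0:ℕ) < 2 ^ d := pow_pos (by norm_num : (0:ℕ) < 2) d
            exact (Nat.mul_lt_mul_left hd).2 hj
        _ = 2 ^ (k + d) := by rw [← pow_add]; ring_nf
    · rw [left_shift_pow]
      exact ⟨le_refl _, le_add_of_nonneg_right (len_nonneg hpos _ _)⟩
  · obtain ⟨d, rfl⟩ := Nat.exists_eq_add_of_le h.le
    refine ⟨j / 2 ^ d, ?_, ?_⟩
    · have : j < 2 ^ m * 2 ^ d := by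
        rw [← pow_add]; exact hj
      exact Nat.div_lt_of_lt_mul (by rw [mul_comm] at this; exact this)
    · have hni := nest_iter hpos hsum m d j hj
      exact ⟨hni.1, le_trans (le_add_of_nonneg_right (len_nonneg hpos _ _)) hni.2⟩

lemma zero_mem_assocCantor (hpos : ∀ n, 0 < a n) (hdec : Antitone a) (hsum : Summable a) :
    (0:ℝ) ∈ assocCantor a := by
  have := left_mem_assocCantor hpos hdec hsum (k := 0) (j := 0) (by norm_num)
  rwa [left_zero] at this

end CantorAux
namespace CantorAux
open Finset Filter Topology

lemma coverNum_le_card {r : ℝ} {F : Set ℝ} {S : Finset ℝ}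
    (h : F ⊆ ⋃ x ∈ S, Metric.closedBall x r) : coverNum r F ≤ S.card :=
  Nat.sInf_le ⟨S, rfl, h⟩

lemma exists_cover_Icc {lo hi r : ℝ} (hr : 0 < r) (hlohi : lo ≤ hi) :
    ∃ S : Finset ℝ, Set.Icc lo hi ⊆ ⋃ x ∈ S, Metric.closedBall x r ∧
      (S.card : ℝ) ≤ (hi - lo) / (2 * r) + 1 := by
  set N : ℕ := ⌊(hi - lo) / (2 * r)⌋₊ + 1 with hN
  refine ⟨(Finset.range N).image (fun i : ℕ => lo + r + 2 * r * i), ?_, ?_⟩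
  · intro y hy
    obtain ⟨hy1, hy2⟩ := hy
    set i : ℕ := ⌊(y - lo) / (2 * r)⌋₊ with hidef
    have h2r : (0:ℝ) < 2 * r := by linarith
    have hnn : 0 ≤ (y - lo) / (2 * r) := div_nonneg (by linarith) h2r.le
    have hfl : (i : ℝ) ≤ (y - lo) / (2 * r) := Nat.floor_le hnn
    have hfu : (y - lo) / (2 * r) < i + 1 := Nat.lt_floor_add_one _
    have hlow : 2 * r * i ≤ y - lo := by
      rw [mul_comm]
      exact (le_div_iff₀ h2r).1 hfl
    have hhigh : y - lo < 2 * r * (i + 1) := by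
      rw [mul_comm]
      exact (div_lt_iff₀ h2r).1 hfu
    have hiN : i < N := by
      have : (y - lo) / (2 * r) ≤ (hi - lo) / (2 * r) := by
        have h9 : y - lo ≤ hi - lo := by linarith
        gcongr
      have := Nat.floor_mono this
      omega
    refine Set.mem_iUnion₂.2 ⟨lo + r + 2 * r * i, ?_, ?_⟩
    · exact Finset.mem_image.2 ⟨i, Finset.mem_range.2 hiN, rfl⟩
    · rw [Metric.mem_closedBall, Real.dist_eq, abs_le]
      constructor <;> nlinarith
  · have hcard : ((Finset.range N).image (fun i : ℕ => lo + r + 2 * r * i)).card ≤ N :=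
      le_trans Finset.card_image_le (le_of_eq (Finset.card_range N))
    have hfl : (⌊(hi - lo) / (2 * r)⌋₊ : ℝ) ≤ (hi - lo) / (2 * r) :=
      Nat.floor_le (div_nonneg (by linarith) (by linarith))
    calc (((Finset.range N).image (fun i : ℕ => lo + r + 2 * r * i)).card : ℝ)
        ≤ (N : ℝ) := by exact_mod_cast hcard
      _ ≤ (hi - lo) / (2 * r) + 1 := by rw [hN]; push_cast; linarith

lemma covers_nonempty {F : Set ℝ} {lo hi r : ℝ} (hr : 0 < r) (hlohi : lo ≤ hi)
    (hF : F ⊆ Set.Icc lo hi) :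
    {n : ℕ | ∃ S : Finset ℝ, S.card = n ∧ F ⊆ ⋃ x ∈ S, Metric.closedBall x r}.Nonempty := by
  obtain ⟨S, hS, -⟩ := exists_cover_Icc hr hlohi
  exact ⟨S.card, S, rfl, hF.trans hS⟩

lemma coverNum_le_linear {F : Set ℝ} {lo hi r : ℝ} (hr : 0 < r) (hlohi : lo ≤ hi)
    (hF : F ⊆ Set.Icc lo hi) :
    (coverNum r F : ℝ) ≤ (hi - lo) / (2 * r) + 1 := by
  obtain ⟨S, hS, hcard⟩ := exists_cover_Icc hr hlohi
  have := coverNum_le_card (r := r) (F := F) (hF.trans hS)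
  calc (coverNum r F : ℝ) ≤ (S.card : ℝ) := by exact_mod_cast this
    _ ≤ _ := hcard

lemma coverNum_pos {F : Set ℝ} {r : ℝ}
    (hne : {n : ℕ | ∃ S : Finset ℝ, S.card = n ∧ F ⊆ ⋃ x ∈ S, Metric.closedBall x r}.Nonempty)
    (hF : F.Nonempty) : 1 ≤ coverNum r F := by
  have hmem := Nat.sInf_mem hne
  obtain ⟨S, hcard, hcov⟩ := hmem
  obtain ⟨y, hy⟩ := hF
  obtain ⟨c, hcS, -⟩ := Set.mem_iUnion₂.1 (hcov hy)
  have : S.Nonempty := ⟨c, hcS⟩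
  have := Finset.card_pos.2 this
  rw [coverNum, ← hcard] at *
  omega

lemma le_coverNum_of_spaced {r d : ℝ} {F : Set ℝ} {p : ℕ → ℝ} {M : ℕ}
    (hrd : r ≤ d) (hr : 0 < r)
    (hmem : ∀ t, t < M → p t ∈ F)
    (hsep : ∀ t, t + 1 < M → p t + d ≤ p (t + 1))
    (hne : {n : ℕ | ∃ S : Finset ℝ, S.card = n ∧ F ⊆ ⋃ x ∈ S, Metric.closedBall x r}.Nonempty) :
    M ≤ 3 * coverNum r F := by
  classical
  have grow : ∀ e s, s + e < M → p s + e * d ≤ p (s + e) := by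
    intro e
    induction e with
    | zero => intro s _; simp
    | succ e ih =>
        intro s h
        have h1 := ih s (by omega)
        have h2 := hsep (s + e) (by omega)
        have : ((e:ℝ) + 1) * d = e * d + d := by ring
        push_cast
        rw [show s + (e + 1) = (s + e) + 1 from rfl]
        nlinarith
  obtain ⟨S, hcard, hcov⟩ := Nat.sInf_mem hne
  have hch : ∀ t, ∃ c : ℝ, t < M → (c ∈ S ∧ p t ∈ Metric.closedBall c r) := by
    intro t
    by_cases h : t < M
    · obtain ⟨c, hcS, hc⟩ := Set.mem_iUnion₂.1 (hcov (hmem t h))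
      exact ⟨c, fun _ => ⟨hcS, hc⟩⟩
    · exact ⟨0, fun h' => absurd h' h⟩
  choose f hf using hch
  have key : (Finset.range M).card ≤ 3 * ((Finset.range M).image f).card := by
    refine Finset.card_le_mul_card_image _ 3 (fun b hb => ?_)
    set Fb := (Finset.range M).filter (fun t => f t = b) with hFb
    obtain ⟨t0, ht0⟩ := Finset.mem_image.1 hb
    have hFbne : Fb.Nonempty := ⟨t0, Finset.mem_filter.2 ⟨ht0.1, ht0.2⟩⟩
    set m := Fb.min' hFbne with hm
    have hmFb : m ∈ Fb := Fb.min'_mem hFbne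
    have hsub : Fb ⊆ Finset.Icc m (m + 2) := by
      intro t ht
      refine Finset.mem_Icc.2 ⟨Fb.min'_le t ht, ?_⟩
      by_contra hcon
      push_neg at hcon
      have htM : t < M := Finset.mem_range.1 (Finset.mem_filter.1 ht).1
      have hmM : m < M := Finset.mem_range.1 (Finset.mem_filter.1 hmFb).1
      have hmt : m ≤ t := Fb.min'_le t ht
      have hgrow := grow (t - m) m (by omega)
      rw [show m + (t - m) = t from by omega] at hgrow
      have h3 : (3:ℝ) ≤ ((t - m : ℕ) : ℝ) := by
        have : 3 ≤ t - m := by omega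
        exact_mod_cast this
      have hb1 : p t ∈ Metric.closedBall b r := by
        have := (hf t htM).2
        rwa [(Finset.mem_filter.1 ht).2] at this
      have hb2 : p m ∈ Metric.closedBall b r := by
        have := (hf m hmM).2
        rwa [(Finset.mem_filter.1 hmFb).2] at this
      rw [Metric.mem_closedBall, Real.dist_eq, abs_le] at hb1 hb2
      nlinarith [hb1.1, hb1.2, hb2.1, hb2.2, hgrow, h3]
    calc Fb.card ≤ (Finset.Icc m (m + 2)).card := Finset.card_le_card hsub
      _ = 3 := by rw [Nat.card_Icc]; omega
  have himg : (Finset.range M).image f ⊆ S := by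
    refine Finset.image_subset_iff.2 (fun t ht => ?_)
    exact (hf t (Finset.mem_range.1 ht)).1
  calc M = (Finset.range M).card := (Finset.card_range M).symm
    _ ≤ 3 * ((Finset.range M).image f).card := key
    _ ≤ 3 * S.card := by
        have := Finset.card_le_card himg
        omega
    _ = 3 * coverNum r F := by rw [coverNum, hcard]

end CantorAux
namespace CantorAux
open Finset Filter Topology

variable {a : ℕ → ℝ}

lemma ratio_ge (hpos : ∀ n, 0 < a n) (hsum : Summable a) (k n : ℕ) :
    (2:ℝ) ^ n ≤ avgLen a k / avgLen a (k + n) := by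
  have h1 := avg_pow hpos hsum k n
  have h2 := avg_pos hpos hsum (k + n)
  have h3 := avg_pos hpos hsum k
  have h4 : (0:ℝ) < 2 ^ n := by positivity
  rw [le_div_iff₀ h2]
  calc (2:ℝ) ^ n * avgLen a (k + n) ≤ 2 ^ n * (avgLen a k / 2 ^ n) := by nlinarith
    _ = avgLen a k := by field_simp

lemma ratio_pos (hpos : ∀ n, 0 < a n) (hsum : Summable a) (k n : ℕ) :
    0 < avgLen a k / avgLen a (k + n) :=
  div_pos (avg_pos hpos hsum k) (avg_pos hpos hsum (k + n))

lemma log_ratio_pos (hpos : ∀ n, 0 < a n) (hsum : Summable a) (k : ℕ) {n : ℕ} (hn : 1 ≤ n) :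
    0 < Real.log (avgLen a k / avgLen a (k + n)) := by
  apply Real.log_pos
  have h1 := ratio_ge hpos hsum k n
  have h2 : (2:ℝ) ≤ 2 ^ n := by
    calc (2:ℝ) = 2 ^ 1 := (pow_one 2).symm
      _ ≤ 2 ^ n := pow_le_pow_right₀ (by norm_num) hn
  linarith

lemma rpow_le_two_pow {q β : ℝ} {n : ℕ} (hq : 0 < q) (hlog : 0 < Real.log q)
    (h : β ≤ n * Real.log 2 / Real.log q) : q ^ β ≤ (2:ℝ) ^ n := by
  have h1 : β * Real.log q ≤ n * Real.log 2 := by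
    rw [le_div_iff₀ hlog] at h; exact h
  rw [Real.rpow_def_of_pos hq]
  have h3 : (2:ℝ) ^ n = Real.exp (n * Real.log 2) := by
    rw [← Real.log_pow, Real.exp_log (by positivity)]
  rw [h3]
  exact Real.exp_le_exp.2 (by rw [mul_comm]; exact h1)

lemma two_pow_lt_rpow {q β : ℝ} {n : ℕ} (hq : 0 < q) (hlog : 0 < Real.log q)
    (h : n * Real.log 2 / Real.log q < β) : (2:ℝ) ^ n < q ^ β := by
  have h1 : n * Real.log 2 < β * Real.log q := by
    rw [div_lt_iff₀ hlog] at h; linarith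
  rw [Real.rpow_def_of_pos hq]
  have h3 : (2:ℝ) ^ n = Real.exp (n * Real.log 2) := by
    rw [← Real.log_pow, Real.exp_log (by positivity)]
  rw [h3]
  exact Real.exp_lt_exp.2 (by rw [mul_comm] at h1; linarith)

/-- `len (k, j) ≤ R → ∃ minimal k`: existence of a level with small interval -/
lemma exists_small_len (hpos : ∀ n, 0 < a n) (hdec : Antitone a) (hsum : Summable a)
    {R : ℝ} (hR : 0 < R) (jf : ℕ → ℕ) (hjf : ∀ k, jf k < 2 ^ k) :
    ∃ k, cantorLen a k (jf k) ≤ R := by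
  obtain ⟨M, hM⟩ := exists_nat_gt (tailN a 0 / R)
  refine ⟨M + 2, ?_⟩
  have h1 : cantorLen a (M + 2) (jf (M + 2)) ≤ cantorLen a (M + 2) 0 :=
    len_mono_j hpos hdec hsum (hjf (M + 2)) (Nat.zero_le _)
  have h2 : cantorLen a (M + 2) 0 ≤ avgLen a (M + 1) := len_succ_le_avg hpos hdec hsum (M + 1)
  have h3 : avgLen a (M + 1) ≤ tailN a 0 / 2 ^ (M + 1) := avg_le_of_tail0 hpos hsum (M + 1)
  have h4 : (M:ℝ) + 1 ≤ 2 ^ (M + 1) := by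
    have := (Nat.lt_two_pow_self (n := M + 1))
    exact_mod_cast this.le
  have hM0 : (0:ℝ) < M := by
    rcases Nat.eq_zero_or_pos M with h | h
    · exfalso
      subst h
      simp at hM
      have := tailN_nonneg hpos 0
      have := div_nonneg this hR.le
      linarith
    · exact_mod_cast h
  have htail : tailN a 0 < R * M := by
    rw [div_lt_iff₀ hR] at hM
    linarith
  have h5 : tailN a 0 / 2 ^ (M + 1) < R := by
    rw [div_lt_iff₀ (by positivity)]
    have hRM : R * M ≤ R * 2 ^ (M + 1) := by
      have : (M:ℝ) ≤ 2 ^ (M + 1) := by linarith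
      nlinarith
    linarith
  linarith

lemma exists_small_avg (hpos : ∀ n, 0 < a n) (hsum : Summable a)
    {r : ℝ} (hr : 0 < r) (k : ℕ) : ∃ n, avgLen a (k + n + 2) < r := by
  obtain ⟨M, hM⟩ := exists_nat_gt (tailN a 0 / r)
  refine ⟨M, ?_⟩
  have h3 : avgLen a (k + M + 2) ≤ tailN a 0 / 2 ^ (k + M + 2) := avg_le_of_tail0 hpos hsum _
  have h4 : (M:ℝ) + 1 ≤ 2 ^ (k + M + 2) := by
    have h5 : M + 1 < 2 ^ (M + 1) := (Nat.lt_two_pow_self (n := M + 1))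
    have h6 : (2:ℕ) ^ (M + 1) ≤ 2 ^ (k + M + 2) := Nat.pow_le_pow_right (by norm_num) (by omega)
    exact_mod_cast (by omega : M + 1 ≤ 2 ^ (k + M + 2))
  have htail : tailN a 0 < r * (M + 1) := by
    rw [div_lt_iff₀ hr] at hM
    nlinarith
  have h5 : tailN a 0 / 2 ^ (k + M + 2) < r := by
    rw [div_lt_iff₀ (by positivity)]
    nlinarith
  linarith

end CantorAux
namespace CantorAux
open Finset Filter Topology

variable {a : ℕ → ℝ}

lemma ball_inter_subset_Icc (x R : ℝ) (C : Set ℝ) :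
    Metric.closedBall x R ∩ C ⊆ Set.Icc (x - R) (x + R) := by
  intro y hy
  have h := hy.1
  rw [Metric.mem_closedBall, Real.dist_eq, abs_le] at h
  exact ⟨by linarith [h.1], by linarith [h.2]⟩

lemma dir1 (hpos : ∀ n, 0 < a n) (hdec : Antitone a) (hsum : Summable a) {β : ℝ}
    (hβ : ∃ kβ nβ : ℕ, ∀ k : ℕ, kβ ≤ k → ∀ n : ℕ, nβ ≤ n →
        β ≤ (n : ℝ) * Real.log 2 / Real.log (avgLen a k / avgLen a (k + n))) :
    ∃ c > (0 : ℝ), ∃ ρ > (0 : ℝ), ∀ x ∈ assocCantor a, ∀ r R : ℝ,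
        0 < r → r < R → R < ρ →
        c * (R / r) ^ β ≤ (coverNum r (Metric.closedBall x R ∩ assocCantor a) : ℝ) := by
  classical
  obtain ⟨kβ, nβ, hβf⟩ := hβ
  rcases le_or_gt β 0 with hβ0 | hβ0
  · refine ⟨1, one_pos, 1, one_pos, ?_⟩
    intro x hx r R hr hrR hRρ
    have hR0 : 0 < R := lt_trans hr hrR
    have hFsub := ball_inter_subset_Icc x R (assocCantor a)
    have hne := covers_nonempty hr (by linarith) hFsub
    have hFx : x ∈ Metric.closedBall x R ∩ assocCantor a :=
      ⟨Metric.mem_closedBall_self hR0.le, hx⟩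
    have hN := coverNum_pos hne ⟨x, hFx⟩
    have hratio : (1:ℝ) ≤ R / r := by rw [le_div_iff₀ hr]; linarith
    have hrp : (R / r) ^ β ≤ 1 := Real.rpow_le_one_of_one_le_of_nonpos hratio hβ0
    have hcast : (1:ℝ) ≤ (coverNum r (Metric.closedBall x R ∩ assocCantor a) : ℝ) := by
      exact_mod_cast hN
    calc (1:ℝ) * (R / r) ^ β ≤ 1 := by rw [one_mul]; exact hrp
      _ ≤ _ := hcast
  · refine ⟨1 / (3 * 2 ^ (nβ + 5)), by positivity, avgLen a (kβ + 3),
      avg_pos hpos hsum _, ?_⟩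
    intro x hx r R hr hrR hRρ
    have hR0 : 0 < R := lt_trans hr hrR
    set F := Metric.closedBall x R ∩ assocCantor a with hFdef
    have hFsub : F ⊆ Set.Icc (x - R) (x + R) := ball_inter_subset_Icc x R _
    have hne := covers_nonempty hr (by linarith) hFsub
    have hFx : x ∈ F := ⟨Metric.mem_closedBall_self hR0.le, hx⟩
    have hN1 := coverNum_pos hne ⟨x, hFx⟩
    obtain hxlev := (mem_level_iff a x).1 hx
    choose jf hjlt hjmem using hxlev
    have hex : ∃ k, cantorLen a k (jf k) ≤ R := exists_small_len hpos hdec hsum hR0 jf hjlt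
    set k := Nat.find hex with hkdef
    have hklen : cantorLen a k (jf k) ≤ R := Nat.find_spec hex
    have hk3 : kβ + 3 ≤ k := by
      by_contra hcon
      push_neg at hcon
      have h1 : avgLen a (k + 1) ≤ cantorLen a k (jf k) := avg_succ_le_len hpos hdec hsum (hjlt k)
      have h2 : avgLen a (kβ + 3) ≤ avgLen a (k + 1) := avg_anti hpos hsum (by omega)
      linarith
    have hmin := Nat.find_min hex (show k - 1 < k by omega)
    push_neg at hmin
    have hR2 : R < avgLen a (k - 2) := by
      have h1 : cantorLen a (k-1) (jf (k-1)) ≤ cantorLen a (k-1) 0 :=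
        len_mono_j hpos hdec hsum (hjlt (k-1)) (Nat.zero_le _)
      have h2 : cantorLen a (k-1) 0 ≤ avgLen a (k - 2) := by
        have h3 := len_succ_le_avg hpos hdec hsum (k - 2)
        rwa [show k - 2 + 1 = k - 1 from by omega] at h3
      linarith
    have hex2 : ∃ n, avgLen a (k + n + 2) < r := exists_small_avg hpos hsum hr k
    set n := Nat.find hex2 with hndef
    have hnr : avgLen a (k + n + 2) < r := Nat.find_spec hex2
    -- counting bound : 2^n ≤ 3 * coverNum
    have hcount : (2:ℝ) ^ n ≤ 3 * (coverNum r F : ℝ) := by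
      rcases Nat.eq_zero_or_pos n with hn0 | hn1
      · rw [hn0]
        have hcast : (1:ℝ) ≤ (coverNum r F : ℝ) := by exact_mod_cast hN1
        norm_num
        linarith
      · have hminn := Nat.find_min hex2 (show n - 1 < n by omega)
        push_neg at hminn
        have hd : r ≤ avgLen a (k + n + 1) := by
          have h4 := hminn
          rwa [show k + (n-1) + 2 = k + n + 1 from by omega] at h4
        set K := k + n with hK
        set p : ℕ → ℝ := fun t => cantorLeft a K (2 ^ n * jf k + t) with hp
        have hidx : ∀ t, t < 2 ^ n → 2 ^ n * jf k + t < 2 ^ K := by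
          intro t ht
          have h1 : jf k + 1 ≤ 2 ^ k := hjlt k
          have h2 : 2 ^ n * (jf k + 1) ≤ 2 ^ n * 2 ^ k := Nat.mul_le_mul_left _ h1
          have h3 : (2:ℕ) ^ n * 2 ^ k = 2 ^ K := by rw [← pow_add, hK]; ring_nf
          have h4 : 2 ^ n * (jf k + 1) = 2 ^ n * jf k + 2 ^ n := by ring
          omega
        have hmemp : ∀ t, t < 2 ^ n → p t ∈ F := by
          intro t ht
          have hidx' := hidx t ht
          have hdiv : (2 ^ n * jf k + t) / 2 ^ n = jf k := by
            rw [Nat.mul_add_div (pow_pos (by norm_num : (0:ℕ) < 2) n)]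
            rw [Nat.div_eq_of_lt ht]
            omega
          have hni := nest_iter hpos hsum k n _ hidx'
          rw [hdiv] at hni
          have hxI := hjmem k
          have hlen0 : 0 ≤ cantorLen a K (2 ^ n * jf k + t) := len_nonneg hpos _ _
          refine ⟨?_, left_mem_assocCantor hpos hdec hsum hidx'⟩
          rw [Metric.mem_closedBall, Real.dist_eq, abs_le]
          have hx1 := hxI.1
          have hx2 := hxI.2
          constructor
          · have : cantorLeft a k (jf k) ≤ p t := hni.1
            linarith
          · have : p t ≤ cantorLeft a k (jf k) + cantorLen a k (jf k) := by
              have := hni.2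
              linarith
            linarith
        have hsep : ∀ t, t + 1 < 2 ^ n → p t + avgLen a (K + 1) ≤ p (t + 1) := by
          intro t ht
          have hidx1 : 2 ^ n * jf k + t + 1 < 2 ^ K := by
            have := hidx (t+1) ht
            omega
          have h5 := right_lt_left_succ hpos hsum K (2 ^ n * jf k + t) hidx1
          have h6 : avgLen a (K + 1) ≤ cantorLen a K (2 ^ n * jf k + t) :=
            avg_succ_le_len hpos hdec hsum (by omega)
          have h7 : p (t + 1) = cantorLeft a K (2 ^ n * jf k + t + 1) := by
            rw [hp]
            exact congrArg _ (by omega)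
          rw [h7]
          linarith
        have hkey := le_coverNum_of_spaced hd hr hmemp hsep hne
        calc ((2:ℝ) ^ n) = ((2 ^ n : ℕ) : ℝ) := by push_cast; ring
          _ ≤ 3 * (coverNum r F : ℝ) := by exact_mod_cast hkey
    -- the formula bound
    set n' := max (n + 4) (max nβ 1) with hn'
    have hform := hβf (k - 2) (by omega) n'
      (le_trans (le_max_left nβ 1) (le_max_right (n+4) (max nβ 1)))
    set q := avgLen a (k-2) / avgLen a ((k-2) + n') with hq
    have hq0 : 0 < q := ratio_pos hpos hsum _ _
    have hlq : 0 < Real.log q :=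
      log_ratio_pos hpos hsum (k-2)
        (le_trans (le_max_right nβ 1) (le_max_right (n+4) (max nβ 1)))
    have hqβ : q ^ β ≤ (2:ℝ) ^ n' := rpow_le_two_pow hq0 hlq hform
    have hrq : avgLen a ((k-2) + n') < r := by
      have h1 : avgLen a ((k-2) + n') ≤ avgLen a (k + n + 2) := avg_anti hpos hsum (by omega)
      linarith
    have hRr : R / r ≤ q :=
      div_le_div₀ (avg_pos hpos hsum (k-2)).le hR2.le (avg_pos hpos hsum ((k-2)+n')) hrq.le
    have hRr0 : 0 ≤ R / r := le_of_lt (div_pos hR0 hr)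
    have hpow : (R / r) ^ β ≤ (2:ℝ) ^ n' :=
      le_trans (Real.rpow_le_rpow hRr0 hRr hβ0.le) hqβ
    have hn'le : n' ≤ n + nβ + 5 := by omega
    have h2n' : (2:ℝ) ^ n' ≤ 2 ^ (nβ + 5) * 2 ^ n := by
      calc (2:ℝ) ^ n' ≤ 2 ^ (n + nβ + 5) := pow_le_pow_right₀ (by norm_num) hn'le
        _ = 2 ^ (nβ + 5) * 2 ^ n := by rw [← pow_add]; ring_nf
    have hc3 : (0:ℝ) < 3 * 2 ^ (nβ + 5) := by positivity
    rw [div_mul_eq_mul_div, one_mul, div_le_iff₀ hc3]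
    have hp5 : (0:ℝ) < 2 ^ (nβ + 5) := by positivity
    nlinarith [hpow, h2n', hcount]

end CantorAux
namespace CantorAux
open Finset Filter Topology

variable {a : ℕ → ℝ}

lemma dir2 (hpos : ∀ n, 0 < a n) (hdec : Antitone a) (hsum : Summable a) {α β : ℝ}
    (hβ0 : 0 < β) (hαβ : β < α)
    (hnot : ∀ kβ nβ : ℕ, ∃ k, kβ ≤ k ∧ ∃ n, nβ ≤ n ∧
        (n : ℝ) * Real.log 2 / Real.log (avgLen a k / avgLen a (k + n)) < β) :
    ¬ (∃ c > (0:ℝ), ∃ ρ > (0:ℝ), ∀ x ∈ assocCantor a, ∀ r R : ℝ, 0 < r → r < R → R < ρ →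
        c * (R / r) ^ α ≤ (coverNum r (Metric.closedBall x R ∩ assocCantor a) : ℝ)) := by
  rintro ⟨c, hc, ρ, hρ, hmem⟩
  have hlog2 : 0 < Real.log 2 := Real.log_pos (by norm_num)
  set δ := α - β with hδ
  have hδ0 : 0 < δ := by linarith
  obtain ⟨N1, hN1⟩ := exists_nat_gt (2 / (c * δ * Real.log 2))
  obtain ⟨M, hM⟩ := exists_nat_gt (tailN a 0 / ρ)
  obtain ⟨k, hkK, m, hmN, hlt⟩ := hnot (M + 3) (max N1 1)
  have hm1 : 1 ≤ m := le_trans (le_max_right N1 1) hmN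
  have hmN1 : N1 ≤ m := le_trans (le_max_left N1 1) hmN
  set q := avgLen a k / avgLen a (k + m) with hq
  have hq0 : 0 < q := ratio_pos hpos hsum k m
  have hlq : 0 < Real.log q := log_ratio_pos hpos hsum k hm1
  have hqm : (2:ℝ) ^ m < q ^ β := two_pow_lt_rpow hq0 hlq hlt
  set n := m + 1 with hn
  set R := cantorLen a k 0 with hR
  set r := cantorLen a (k + n) 0 / 2 with hr
  have hk1 : 1 ≤ k := by omega
  have hR0 : 0 < R := by rw [hR]; exact len_pos hpos hsum (by positivity)
  have hlenkn : 0 < cantorLen a (k + n) 0 := len_pos hpos hsum (by positivity)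
  have hr0 : 0 < r := by rw [hr]; linarith
  have hlen_le : cantorLen a (k + n) 0 ≤ avgLen a (k + m) := by
    have h := len_succ_le_avg hpos hdec hsum (k + m)
    rwa [show k + m + 1 = k + n from rfl] at h
  have havgk : avgLen a k ≤ R := by rw [hR]; exact avg_le_len0 hpos hdec hsum k
  have havg_anti : avgLen a (k + m) ≤ avgLen a k := avg_anti hpos hsum (by omega)
  have havgk0 : 0 < avgLen a k := avg_pos hpos hsum k
  have havgkm0 : 0 < avgLen a (k + m) := avg_pos hpos hsum (k + m)
  have hrR : r < R := by rw [hr]; linarith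
  have hRρ : R < ρ := by
    have h1 : R ≤ avgLen a (k - 1) := by
      have h := len_succ_le_avg hpos hdec hsum (k - 1)
      rw [show k - 1 + 1 = k from by omega] at h
      rw [hR]; exact h
    have h2 : avgLen a (k-1) ≤ tailN a 0 / 2 ^ (k-1) := avg_le_of_tail0 hpos hsum _
    have h3 : (M:ℝ) + 2 ≤ 2 ^ (k - 1) := by
      have h4 : M + 2 < 2 ^ (M + 2) := (Nat.lt_two_pow_self (n := M+2))
      have h5 : (2:ℕ) ^ (M+2) ≤ 2 ^ (k-1) := Nat.pow_le_pow_right (by norm_num) (by omega)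
      exact_mod_cast (by omega : M + 2 ≤ 2 ^ (k-1))
    have htail0 : 0 ≤ tailN a 0 := tailN_nonneg hpos 0
    have h6 : tailN a 0 < ρ * M := by
      rw [div_lt_iff₀ hρ] at hM; linarith
    have h7 : tailN a 0 / 2 ^ (k-1) < ρ := by
      rw [div_lt_iff₀ (by positivity)]
      have h8 : ρ * M ≤ ρ * 2 ^ (k-1) := by nlinarith
      linarith
    linarith
  -- covering bound
  have hcov : Metric.closedBall 0 R ∩ assocCantor a ⊆
      ⋃ z ∈ (Finset.range (2 ^ n)).image (fun t => cantorLeft a (k + n) t + r),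
        Metric.closedBall z r := by
    intro y hy
    obtain ⟨hyb, hyC⟩ := hy
    rw [Metric.mem_closedBall, Real.dist_eq, sub_zero, abs_le] at hyb
    obtain ⟨j, hjlt, hyI⟩ := (mem_level_iff a y).1 hyC (k + n)
    have hj2n : j < 2 ^ n := by
      by_contra hcon
      push_neg at hcon
      have hmul1 : 2 ^ n * 1 = 2 ^ n := by ring
      have hml : cantorLeft a (k + n) (2 ^ n * 1) ≤ cantorLeft a (k + n) j :=
        left_mono hpos hsum hjlt (by omega)
      rw [left_shift_pow] at hml
      have h2k : 2 ≤ 2 ^ k := by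
        calc (2:ℕ) = 2 ^ 1 := (pow_one 2).symm
          _ ≤ 2 ^ k := Nat.pow_le_pow_right (by norm_num) hk1
      have hgt := right_lt_left_succ hpos hsum k 0 (by omega)
      rw [left_zero] at hgt
      norm_num at hgt
      have hylb : cantorLeft a (k + n) j ≤ y := hyI.1
      have hyub : y ≤ R := hyb.2
      rw [hR] at hyub
      linarith
    refine Set.mem_iUnion₂.2 ⟨cantorLeft a (k + n) j + r, ?_, ?_⟩
    · exact Finset.mem_image.2 ⟨j, Finset.mem_range.2 hj2n, rfl⟩
    · rw [Metric.mem_closedBall, Real.dist_eq, abs_le]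
      have hlenj : cantorLen a (k + n) j ≤ cantorLen a (k + n) 0 :=
        len_mono_j hpos hdec hsum hjlt (Nat.zero_le _)
      have hy1 := hyI.1
      have hy2 := hyI.2
      have h2r : (2:ℝ) * r = cantorLen a (k + n) 0 := by rw [hr]; ring
      constructor
      · linarith
      · linarith
  have hcovN : (coverNum r (Metric.closedBall 0 R ∩ assocCantor a) : ℝ) ≤ (2:ℝ) ^ n := by
    have h1 := coverNum_le_card hcov
    have h2 : ((Finset.range (2 ^ n)).image (fun t => cantorLeft a (k + n) t + r)).card
        ≤ 2 ^ n := le_trans Finset.card_image_le (le_of_eq (Finset.card_range _))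
    have h3 : coverNum r (Metric.closedBall 0 R ∩ assocCantor a) ≤ 2 ^ n := le_trans h1 h2
    calc (coverNum r (Metric.closedBall 0 R ∩ assocCantor a) : ℝ)
        ≤ ((2 ^ n : ℕ) : ℝ) := by exact_mod_cast h3
      _ = (2:ℝ) ^ n := by push_cast; ring
  have happ := hmem 0 (zero_mem_assocCantor hpos hdec hsum) r R hr0 hrR hRρ
  -- lower bound
  have hq2m : (2:ℝ) ^ m ≤ q := ratio_ge hpos hsum k m
  have hrkm : r ≤ avgLen a (k + m) := by rw [hr]; linarith
  have hqRr : q ≤ R / r := div_le_div₀ hR0.le havgk hr0 hrkm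
  have hα0 : 0 ≤ α := le_of_lt (lt_trans hβ0 hαβ)
  have hRr1 : q ^ α ≤ (R / r) ^ α := Real.rpow_le_rpow hq0.le hqRr hα0
  have hsplit : q ^ α = q ^ β * q ^ δ := by
    rw [← Real.rpow_add hq0]
    congr 1
    rw [hδ]; ring
  have hqδ : (2:ℝ) ^ ((m:ℝ) * δ) ≤ q ^ δ := by
    have h1 : ((2:ℝ) ^ m) ^ δ ≤ q ^ δ := Real.rpow_le_rpow (by positivity) hq2m hδ0.le
    have h2 : ((2:ℝ) ^ m : ℝ) ^ δ = (2:ℝ) ^ ((m:ℝ) * δ) := by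
      rw [← Real.rpow_natCast 2 m, ← Real.rpow_mul (by norm_num : (0:ℝ) ≤ 2)]
    rwa [h2] at h1
  have hexp : 2 / c < (2:ℝ) ^ ((m:ℝ) * δ) := by
    rw [Real.rpow_def_of_pos (by norm_num : (0:ℝ) < 2)]
    have h1 := Real.add_one_le_exp (Real.log 2 * ((m:ℝ) * δ))
    have h2 : 2 / c < (N1:ℝ) * (δ * Real.log 2) := by
      have h3 := (div_lt_iff₀ (by positivity : (0:ℝ) < c * δ * Real.log 2)).1 hN1
      rw [div_lt_iff₀ hc]
      calc (2:ℝ) < N1 * (c * δ * Real.log 2) := h3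
        _ = N1 * (δ * Real.log 2) * c := by ring
    have h3 : (N1:ℝ) ≤ m := by exact_mod_cast hmN1
    have h4 : (N1:ℝ) * (δ * Real.log 2) ≤ (m:ℝ) * (δ * Real.log 2) :=
      mul_le_mul_of_nonneg_right h3 (by positivity)
    have h5 : (m:ℝ) * (δ * Real.log 2) = Real.log 2 * ((m:ℝ) * δ) := by ring
    calc 2 / c < (N1:ℝ) * (δ * Real.log 2) := h2
      _ ≤ (m:ℝ) * (δ * Real.log 2) := h4
      _ = Real.log 2 * ((m:ℝ) * δ) := h5
      _ < Real.log 2 * ((m:ℝ) * δ) + 1 := by linarith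
      _ ≤ Real.exp (Real.log 2 * ((m:ℝ) * δ)) := h1
  have hqδfull : 2 / c < q ^ δ := lt_of_lt_of_le hexp hqδ
  have hprod : (2:ℝ) ^ m * (2 / c) < q ^ β * q ^ δ :=
    mul_lt_mul'' hqm hqδfull (pow_nonneg (by norm_num) m) (div_nonneg (by norm_num) hc.le)
  have hfinal : (2:ℝ) ^ n < c * (R / r) ^ α := by
    calc (2:ℝ) ^ n = c * ((2:ℝ) ^ m * (2 / c)) := by
          rw [hn, pow_succ]; field_simp
      _ < c * (q ^ β * q ^ δ) := by
          exact mul_lt_mul_of_pos_left hprod hc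
      _ = c * q ^ α := by rw [hsplit]
      _ ≤ c * (R / r) ^ α := mul_le_mul_of_nonneg_left hRr1 hc.le
  linarith

end CantorAux
namespace CantorAux
open Finset Filter Topology

variable {a : ℕ → ℝ}

lemma Sl_le_one (hpos : ∀ n, 0 < a n) (hdec : Antitone a) (hsum : Summable a) {α : ℝ}
    (hα : ∃ c > (0:ℝ), ∃ ρ > (0:ℝ), ∀ x ∈ assocCantor a, ∀ r R : ℝ, 0 < r → r < R → R < ρ →
        c * (R / r) ^ α ≤ (coverNum r (Metric.closedBall x R ∩ assocCantor a) : ℝ)) :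
    α ≤ 1 := by
  obtain ⟨c, hc, ρ, hρ, hm⟩ := hα
  by_contra hcon
  push_neg at hcon
  set X := (2 / c + 1) ^ (α - 1)⁻¹ with hX
  have hX0 : 0 < X := by
    rw [hX]
    apply Real.rpow_pos_of_pos
    positivity
  set t := max 2 X with ht
  have ht2 : (2:ℝ) ≤ t := le_max_left _ _
  have ht1 : (1:ℝ) < t := by linarith
  have ht0 : (0:ℝ) < t := by linarith
  set R := ρ / 2 with hRdef
  have hR0 : 0 < R := by rw [hRdef]; linarith
  set r := R / t with hrdef
  have hr0 : 0 < r := by rw [hrdef]; positivity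
  have hrR : r < R := by
    rw [hrdef, div_lt_iff₀ ht0]
    nlinarith
  have hRρ : R < ρ := by rw [hRdef]; linarith
  have happ := hm 0 (zero_mem_assocCantor hpos hdec hsum) r R hr0 hrR hRρ
  have hRr : R / r = t := by
    rw [hrdef]
    field_simp
  have hupper : (coverNum r (Metric.closedBall 0 R ∩ assocCantor a) : ℝ) ≤ t + 1 := by
    have hsub : Metric.closedBall 0 R ∩ assocCantor a ⊆ Set.Icc (0 - R) (0 + R) :=
      ball_inter_subset_Icc 0 R _
    have h := coverNum_le_linear hr0 (by linarith) hsub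
    have he : (0 + R - (0 - R)) / (2 * r) = t := by
      rw [hrdef]
      field_simp
      ring
    rwa [he] at h
  -- lower bound on c * t ^ α
  have htX : X ≤ t := le_max_right _ _
  have hα1 : (0:ℝ) < α - 1 := by linarith
  have hpow : 2 / c + 1 ≤ t ^ (α - 1) := by
    have h1 : X ^ (α - 1) ≤ t ^ (α - 1) := Real.rpow_le_rpow hX0.le htX hα1.le
    have h2 : X ^ (α - 1) = 2 / c + 1 := by
      rw [hX, ← Real.rpow_mul (by positivity : (0:ℝ) ≤ 2 / c + 1)]
      rw [inv_mul_cancel₀ (by linarith : α - 1 ≠ 0), Real.rpow_one]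
    linarith
  have hsplit : t ^ α = t ^ (α - 1) * t := by
    have h0 : α = α - 1 + 1 := by ring
    calc t ^ α = t ^ (α - 1 + 1) := congrArg (fun y : ℝ => t ^ y) h0
      _ = t ^ (α - 1) * t ^ (1:ℝ) := Real.rpow_add ht0 _ _
      _ = t ^ (α - 1) * t := by rw [Real.rpow_one]
  have hbig : (2 + c) * t ≤ c * t ^ α := by
    rw [hsplit]
    have h1 : c * (t ^ (α - 1) * t) = (c * t ^ (α - 1)) * t := by ring
    rw [h1]
    have h2 : 2 + c ≤ c * t ^ (α - 1) := by
      have := mul_le_mul_of_nonneg_left hpow hc.le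
      calc (2:ℝ) + c = c * (2 / c + 1) := by field_simp
        _ ≤ c * t ^ (α - 1) := this
    exact mul_le_mul_of_nonneg_right h2 ht0.le
  rw [hRr] at happ
  nlinarith

theorem dimL_formula_aux (hpos : ∀ n, 0 < a n) (hdec : Antitone a) (hsum : Summable a) :
    dimL (assocCantor a) =
      sSup {β : ℝ | ∃ kβ nβ : ℕ, ∀ k : ℕ, kβ ≤ k → ∀ n : ℕ, nβ ≤ n →
        β ≤ (n : ℝ) * Real.log 2 / Real.log (avgLen a k / avgLen a (k + n))} := by
  classical
  set Sr := {β : ℝ | ∃ kβ nβ : ℕ, ∀ k : ℕ, kβ ≤ k → ∀ n : ℕ, nβ ≤ n →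
        β ≤ (n : ℝ) * Real.log 2 / Real.log (avgLen a k / avgLen a (k + n))} with hSr
  set Sl := {α : ℝ | ∃ c > (0 : ℝ), ∃ ρ > (0 : ℝ), ∀ x ∈ assocCantor a, ∀ r R : ℝ,
      0 < r → r < R → R < ρ →
      c * (R / r) ^ α ≤ (coverNum r (Metric.closedBall x R ∩ assocCantor a) : ℝ)} with hSl
  have hlog2 : 0 < Real.log 2 := Real.log_pos (by norm_num)
  have hSr0 : (0:ℝ) ∈ Sr := by
    refine ⟨0, 1, fun k hk n hn => ?_⟩
    have hl := log_ratio_pos hpos hsum k hn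
    have : (0:ℝ) ≤ (n:ℝ) * Real.log 2 := by positivity
    positivity
  have hSr_bdd : BddAbove Sr := by
    refine ⟨1, fun β hβ => ?_⟩
    obtain ⟨kβ, nβ, hf⟩ := hβ
    set n := max nβ 1 with hn
    have h := hf kβ le_rfl n (le_max_left _ _)
    have hn1 : 1 ≤ n := le_max_right _ _
    have hlq := log_ratio_pos hpos hsum kβ hn1
    have hq2 : (2:ℝ) ^ n ≤ avgLen a kβ / avgLen a (kβ + n) := ratio_ge hpos hsum kβ n
    have hlog : (n:ℝ) * Real.log 2 ≤ Real.log (avgLen a kβ / avgLen a (kβ + n)) := by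
      have hlp : Real.log ((2:ℝ) ^ n) = (n:ℝ) * Real.log 2 := Real.log_pow 2 n
      calc (n:ℝ) * Real.log 2 = Real.log ((2:ℝ) ^ n) := hlp.symm
        _ ≤ _ := Real.log_le_log (by positivity) hq2
    calc β ≤ (n:ℝ) * Real.log 2 / Real.log (avgLen a kβ / avgLen a (kβ + n)) := h
      _ ≤ 1 := by rw [div_le_one hlq]; exact hlog
  have hSl_bdd : BddAbove Sl := ⟨1, fun α hα => Sl_le_one hpos hdec hsum hα⟩
  have hSl0 : (0:ℝ) ∈ Sl := dir1 hpos hdec hsum hSr0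
  have hSl_ne : Sl.Nonempty := ⟨0, hSl0⟩
  have hSr_ne : Sr.Nonempty := ⟨0, hSr0⟩
  have hSrSup0 : (0:ℝ) ≤ sSup Sr := le_csSup hSr_bdd hSr0
  rw [dimL]
  apply le_antisymm
  · apply csSup_le hSl_ne
    intro α hα
    by_contra hcon
    push_neg at hcon
    set β := (sSup Sr + α) / 2 with hβ
    have hβ1 : sSup Sr < β := by rw [hβ]; linarith
    have hβ2 : β < α := by rw [hβ]; linarith
    have hβ0 : 0 < β := by linarith
    have hβnotin : β ∉ Sr := fun h => absurd (le_csSup hSr_bdd h) (not_le.2 hβ1)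
    have hnot : ∀ kβ nβ : ℕ, ∃ k, kβ ≤ k ∧ ∃ n, nβ ≤ n ∧
        (n : ℝ) * Real.log 2 / Real.log (avgLen a k / avgLen a (k + n)) < β := by
      rw [hSr] at hβnotin
      simp only [Set.mem_setOf_eq] at hβnotin
      push_neg at hβnotin
      exact hβnotin
    exact dir2 hpos hdec hsum hβ0 hβ2 hnot hα
  · apply csSup_le hSr_ne
    intro β hβ
    exact le_csSup hSl_bdd (dir1 hpos hdec hsum hβ)

end CantorAux
/-- formula for the Lower Assouad dimension of the Cantor set
`C_a` associated to a positive, decreasing, summable sequence `a`. -/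
theorem dimL_assocCantor_formula
    (a : ℕ → ℝ) (hpos : ∀ n, 0 < a n) (hdec : Antitone a) (hsum : Summable a) :
    dimL (assocCantor a) =
      sSup {β : ℝ | ∃ kβ nβ : ℕ, ∀ k : ℕ, kβ ≤ k → ∀ n : ℕ, nβ ≤ n →
        β ≤ (n : ℝ) * Real.log 2 / Real.log (avgLen a k / avgLen a (k + n))} := by
  exact CantorAux.dimL_formula_aux hpos hdec hsum
end
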